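/- arXiv:1903.07861 — 6 statements merged into one kernel-verified Lean document; each statement's English description precedes it below -/
import Mathlib

section
/- Let ξ = (ξ_1, ξ_2, …) be an infinite sequence of random variables with values in a standard Borel space S, with empirical distributions η_n = n⁻¹ ∑_{i=1}^n δ_{ξ_i}. If η is a reverse measure-valued martingale with respect to the tail σ-fields 𝒯_n = σ(η_n, η_{n+1}, …), then (ξ_1, ξ_2, ξ_3, ξ_4, …) has the same distribution as (ξ_2, ξ_1, ξ_3, ξ_4, …); i.e., the law of ξ is invariant under the transposition of the first two coordinates. -/
open MeasureTheory ProbabilityTheory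
open scoped ENNReal

/-- The empirical distribution `η_n = n⁻¹ ∑_{i=1}^n δ_{ξ_i}` of the first `n` terms of
the sequence `ξ` (indexed from `0`). -/
noncomputable def empDist {Ω S : Type*} [MeasurableSpace S] (ξ : ℕ → Ω → S) (n : ℕ) (ω : Ω) :
    Measure S :=
  (n : ℝ≥0∞)⁻¹ • ∑ i ∈ Finset.range n, Measure.dirac (ξ i ω)

/-- The tail σ-field `𝒯_n = σ(η_n, η_{n+1}, …)` generated by the empirical distributions. -/
noncomputable def tailField {Ω S : Type*} [MeasurableSpace S] (ξ : ℕ → Ω → S) (n : ℕ) :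
    MeasurableSpace Ω :=
  ⨆ k, ⨆ _ : n ≤ k, MeasurableSpace.comap (empDist ξ k) inferInstance

/-- `η` is a reverse measure-valued martingale: for every bounded measurable `f` and all
`1 ≤ k ≤ n`, `E[η_k f | 𝒯_n] = η_n f` a.s. -/
def IsReverseMVM {Ω S : Type*} [MeasurableSpace Ω] [MeasurableSpace S]
    (P : Measure Ω) (ξ : ℕ → Ω → S) : Prop :=
  ∀ f : S → ℝ, Measurable f → (∃ C, ∀ x, |f x| ≤ C) →
    ∀ k n : ℕ, 1 ≤ k → k ≤ n →
      P[(fun ω => ∫ x, f x ∂(empDist ξ k ω)) | tailField ξ n]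
        =ᵐ[P] fun ω => ∫ x, f x ∂(empDist ξ n ω)

/-- `ξ` is exchangeable: any finite subfamily with distinct indices has the same joint
distribution as the initial segment of the same length. -/
def Exchangeable {Ω S : Type*} [MeasurableSpace Ω] [MeasurableSpace S]
    (P : Measure Ω) (ξ : ℕ → Ω → S) : Prop :=
  ∀ (m : ℕ) (k : Fin m → ℕ), Function.Injective k →
    Measure.map (fun ω (i : Fin m) => ξ (k i) ω) P
      = Measure.map (fun ω (i : Fin m) => ξ (i : ℕ) ω) P

/-- `ξ` is stationary: the shifted sequence has the same distribution as `ξ`. -/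
def Stationary {Ω S : Type*} [MeasurableSpace Ω] [MeasurableSpace S]
    (P : Measure Ω) (ξ : ℕ → Ω → S) : Prop :=
  Measure.map (fun ω (i : ℕ) => ξ (i + 1) ω) P = Measure.map (fun ω (i : ℕ) => ξ i ω) P

/-- `ξ` is a homogeneous Markov sequence with transition kernel `κ`. -/
def IsHomogeneousMarkov {Ω S : Type*} [MeasurableSpace Ω] [MeasurableSpace S]
    (P : Measure Ω) (ξ : ℕ → Ω → S) : Prop :=
  ∃ κ : Kernel S S, IsMarkovKernel κ ∧
    ∀ n : ℕ, ∀ f : S → ℝ, Measurable f → (∃ C, ∀ x, |f x| ≤ C) →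
      P[(fun ω => f (ξ (n + 1) ω)) |
          MeasurableSpace.comap (fun ω (i : Fin (n + 1)) => ξ (i : ℕ) ω) inferInstance]
        =ᵐ[P] fun ω => ∫ y, f y ∂(κ (ξ n ω))

section AuxSwapMVM

set_option linter.unusedSectionVars false

variable {Ω S : Type*} [MeasurableSpace Ω] [MeasurableSpace S]

lemma empDist_one (ξ : ℕ → Ω → S) (ω : Ω) : empDist ξ 1 ω = Measure.dirac (ξ 0 ω) := by
  simp [empDist]

lemma empDist_apply (ξ : ℕ → Ω → S) (n : ℕ) (ω : Ω) {A : Set S} (hA : MeasurableSet A) :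
    empDist ξ n ω A = (n : ℝ≥0∞)⁻¹ * ∑ i ∈ Finset.range n, A.indicator (1 : S → ℝ≥0∞) (ξ i ω) := by
  simp only [empDist, Measure.smul_apply, Measure.finset_sum_apply, smul_eq_mul]
  congr 1
  exact Finset.sum_congr rfl fun i _ => Measure.dirac_apply' _ hA

lemma measurable_empDist {ξ : ℕ → Ω → S} (hmeas : ∀ i, Measurable (ξ i)) (n : ℕ) :
    Measurable (empDist ξ n) := by
  apply Measure.measurable_of_measurable_coe
  intro s hs
  simp only [fun ω => empDist_apply ξ n ω hs]
  exact (Finset.measurable_sum _ fun i _ =>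
    (measurable_one.indicator hs).comp (hmeas i)).const_mul _

lemma tailField_le {ξ : ℕ → Ω → S} (hmeas : ∀ i, Measurable (ξ i)) (n : ℕ) :
    tailField ξ n ≤ ‹MeasurableSpace Ω› :=
  iSup_le fun k => iSup_le fun _ => (measurable_empDist hmeas k).comap_le

lemma measurable_tail_apply (ξ : ℕ → Ω → S) {n k : ℕ} (hk : n ≤ k) {A : Set S}
    (hA : MeasurableSet A) :
    Measurable[tailField ξ n] fun ω => ((empDist ξ k ω) A).toReal := by
  have h1 : Measurable[MeasurableSpace.comap (empDist ξ k) inferInstance] (empDist ξ k) :=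
    Measurable.of_comap_le le_rfl
  have h2 : Measurable fun μ : Measure S => (μ A).toReal :=
    (Measure.measurable_coe hA).ennreal_toReal
  exact (h2.comp h1).mono (le_iSup₂ (f := fun k (_ : n ≤ k) =>
    MeasurableSpace.comap (empDist ξ k) inferInstance) k hk) le_rfl

lemma empDist_toReal (ξ : ℕ → Ω → S) (n : ℕ) (ω : Ω) {A : Set S} (hA : MeasurableSet A) :
    ((empDist ξ n ω) A).toReal
      = (n : ℝ)⁻¹ * ∑ i ∈ Finset.range n, A.indicator (1 : S → ℝ) (ξ i ω) := by
  rw [empDist_apply ξ n ω hA, ENNReal.toReal_mul, ENNReal.toReal_inv, ENNReal.toReal_natCast,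
    ENNReal.toReal_sum (fun i _ => ?_)]
  · congr 1
    refine Finset.sum_congr rfl fun i _ => ?_
    by_cases h : ξ i ω ∈ A <;> simp [h]
  · by_cases h : ξ i ω ∈ A <;> simp [h]

lemma indicator_eq_empDist (ξ : ℕ → Ω → S) (n : ℕ) (ω : Ω) {A : Set S} (hA : MeasurableSet A) :
    A.indicator (1 : S → ℝ) (ξ n ω)
      = (n + 1 : ℝ) * ((empDist ξ (n + 1) ω) A).toReal - (n : ℝ) * ((empDist ξ n ω) A).toReal
      := by
  rw [empDist_toReal ξ (n+1) ω hA, empDist_toReal ξ n ω hA, Finset.sum_range_succ]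
  push_cast
  rcases Nat.eq_zero_or_pos n with h | h
  · subst h; simp
  · have hn : (n : ℝ) ≠ 0 := Nat.cast_ne_zero.mpr h.ne'
    have hn1 : (n : ℝ) + 1 ≠ 0 := by positivity
    field_simp
    try ring

lemma measurable_xi_tail {ξ : ℕ → Ω → S} {n : ℕ} (hn : 2 ≤ n) :
    Measurable[tailField ξ 2] (ξ n) := by
  intro A hA
  have hg : Measurable[tailField ξ 2] fun ω =>
      (n + 1 : ℝ) * ((empDist ξ (n + 1) ω) A).toReal
        - (n : ℝ) * ((empDist ξ n ω) A).toReal :=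
    ((measurable_tail_apply ξ (by omega) hA).const_mul _).sub
      ((measurable_tail_apply ξ hn hA).const_mul _)
  have : ξ n ⁻¹' A = (fun ω => (n + 1 : ℝ) * ((empDist ξ (n + 1) ω) A).toReal
      - (n : ℝ) * ((empDist ξ n ω) A).toReal) ⁻¹' (Set.Ioi (1/2 : ℝ)) := by
    ext ω
    simp only [Set.mem_preimage, Set.mem_Ioi, ← indicator_eq_empDist ξ n ω hA]
    by_cases h : ξ n ω ∈ A <;> simp [h] <;> norm_num
  rw [this]
  exact hg measurableSet_Ioi

lemma integrable_dirac' {f : S → ℝ} (hf : Measurable f) (a : S) :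
    Integrable f (Measure.dirac a) := by
  refine ⟨hf.stronglyMeasurable.aestronglyMeasurable, ?_⟩
  show (∫⁻ x, (‖f x‖₊ : ℝ≥0∞) ∂Measure.dirac a) < ⊤
  rw [lintegral_dirac' a (by measurability)]
  exact ENNReal.coe_lt_top

lemma integral_empDist_two (ξ : ℕ → Ω → S) (ω : Ω) {f : S → ℝ} (hf : Measurable f) :
    ∫ x, f x ∂(empDist ξ 2 ω) = (f (ξ 0 ω) + f (ξ 1 ω)) / 2 := by
  have h2 : empDist ξ 2 ω = (2 : ℝ≥0∞)⁻¹ •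
      (Measure.dirac (ξ 0 ω) + Measure.dirac (ξ 1 ω)) := by
    simp [empDist, Finset.sum_range_succ]
  rw [h2, integral_smul_measure,
    integral_add_measure (integrable_dirac' hf _) (integrable_dirac' hf _),
    integral_dirac' f _ hf.stronglyMeasurable, integral_dirac' f _ hf.stronglyMeasurable]
  simp only [smul_eq_mul, ENNReal.toReal_inv, ENNReal.toReal_ofNat]
  ring

lemma bdd_integrable {P : Measure Ω} [IsProbabilityMeasure P] {g : Ω → ℝ}
    (hg : Measurable g) {C : ℝ} (h : ∀ ω, |g ω| ≤ C) : Integrable g P :=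
  (integrable_const C).mono' hg.aestronglyMeasurable
    (Filter.Eventually.of_forall fun ω => by rw [Real.norm_eq_abs]; exact h ω)

lemma core {P : Measure Ω} [IsProbabilityMeasure P] {ξ : ℕ → Ω → S}
    (hmeas : ∀ i, Measurable (ξ i)) (hmart : IsReverseMVM P ξ)
    {f : S → ℝ} (hf : Measurable f) {C : ℝ} (hfC : ∀ x, |f x| ≤ C)
    {G : Ω → ℝ} (hG : Measurable[tailField ξ 2] G) {D : ℝ} (hGD : ∀ ω, |G ω| ≤ D) :
    ∫ ω, G ω * f (ξ 0 ω) ∂P = ∫ ω, G ω * f (ξ 1 ω) ∂P := by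
  have hm : tailField ξ 2 ≤ ‹MeasurableSpace Ω› := tailField_le hmeas 2
  haveI : SigmaFinite (P.trim hm) := by
    haveI := isFiniteMeasure_trim (μ := P) hm; infer_instance
  have hGm : Measurable G := hG.mono hm le_rfl
  set X : Ω → ℝ := fun ω => f (ξ 0 ω) with hX
  set Y : Ω → ℝ := fun ω => (f (ξ 0 ω) + f (ξ 1 ω)) / 2 with hYdef
  have hXm : Measurable X := hf.comp (hmeas 0)
  have hX1m : Measurable fun ω => f (ξ 1 ω) := hf.comp (hmeas 1)
  have hYm : Measurable Y := (hXm.add hX1m).div_const 2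
  have hXC : ∀ ω, |X ω| ≤ C := fun ω => hfC _
  have hYC : ∀ ω, |Y ω| ≤ C := by
    intro ω
    have := hfC (ξ 0 ω); have := hfC (ξ 1 ω)
    simp only [hYdef, abs_div, abs_two]
    rw [div_le_iff₀ (by norm_num)]
    calc |f (ξ 0 ω) + f (ξ 1 ω)| ≤ |f (ξ 0 ω)| + |f (ξ 1 ω)| := abs_add_le _ _
      _ ≤ C + C := by gcongr <;> assumption
      _ = C * 2 := by ring
  have hXint : Integrable X P := bdd_integrable hXm hXC
  have hGXint : Integrable (fun ω => G ω * X ω) P :=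
    bdd_integrable (hGm.mul hXm) (C := D * C) fun ω => by
      rw [abs_mul]
      exact mul_le_mul (hGD ω) (hXC ω) (abs_nonneg _) ((abs_nonneg _).trans (hGD ω))
  have hGYint : Integrable (fun ω => G ω * Y ω) P :=
    bdd_integrable (hGm.mul hYm) (C := D * C) fun ω => by
      rw [abs_mul]
      exact mul_le_mul (hGD ω) (hYC ω) (abs_nonneg _) ((abs_nonneg _).trans (hGD ω))
  -- conditional expectation identity
  have hcond : P[X|tailField ξ 2] =ᵐ[P] Y := by
    have h := hmart f hf ⟨C, hfC⟩ 1 2 le_rfl (by norm_num)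
    have e1 : (fun ω => ∫ x, f x ∂(empDist ξ 1 ω)) = X := by
      funext ω
      rw [empDist_one, integral_dirac' f _ hf.stronglyMeasurable]
    have e2 : (fun ω => ∫ x, f x ∂(empDist ξ 2 ω)) = Y := by
      funext ω; exact integral_empDist_two ξ ω hf
    rwa [e1, e2] at h
  have key : ∫ ω, G ω * X ω ∂P = ∫ ω, G ω * Y ω ∂P := by
    have h1 : P[G * X|tailField ξ 2] =ᵐ[P] G * P[X|tailField ξ 2] :=
      condExp_mul_of_stronglyMeasurable_left hG.stronglyMeasurable hGXint hXint
    have h2 : (G * P[X|tailField ξ 2] : Ω → ℝ) =ᵐ[P] fun ω => G ω * Y ω :=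
      Filter.EventuallyEq.mul Filter.EventuallyEq.rfl hcond
    calc ∫ ω, G ω * X ω ∂P = ∫ ω, (G * X) ω ∂P := rfl
      _ = ∫ ω, (P[G * X|tailField ξ 2]) ω ∂P := (integral_condExp hm).symm
      _ = ∫ ω, G ω * Y ω ∂P := integral_congr_ae (h1.trans h2)
  have hsub : (fun ω => G ω * f (ξ 1 ω))
      = fun ω => 2 * (G ω * Y ω) - G ω * X ω := by
    funext ω; simp only [hYdef, hX]; ring
  rw [key, hsub, integral_sub (hGYint.const_mul 2) hGXint, integral_const_mul, key]
  ring

lemma abs_indicator_le_one (A : Set S) (x : S) : |A.indicator (1 : S → ℝ) x| ≤ 1 := by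
  by_cases hx : x ∈ A <;> simp [hx]

lemma indicator_mul_indicator (A0 A1 : Set S) (x : S) :
    A0.indicator (1 : S → ℝ) x * A1.indicator (1 : S → ℝ) x
      = (A0 ∩ A1).indicator (1 : S → ℝ) x := by
  by_cases hx0 : x ∈ A0 <;> by_cases hx1 : x ∈ A1 <;>
    simp [Set.indicator_apply, hx0, hx1, Set.mem_inter_iff]

lemma swap_two {P : Measure Ω} [IsProbabilityMeasure P] {ξ : ℕ → Ω → S}
    (hmeas : ∀ i, Measurable (ξ i)) (hmart : IsReverseMVM P ξ)
    {A0 A1 : Set S} (h0 : MeasurableSet A0) (h1 : MeasurableSet A1)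
    {G : Ω → ℝ} (hG : Measurable[tailField ξ 2] G) {D : ℝ} (hGD : ∀ ω, |G ω| ≤ D) :
    ∫ ω, G ω * (A0.indicator 1 (ξ 0 ω) * A1.indicator 1 (ξ 1 ω)) ∂P
      = ∫ ω, G ω * (A0.indicator 1 (ξ 1 ω) * A1.indicator 1 (ξ 0 ω)) ∂P := by
  have hm : tailField ξ 2 ≤ ‹MeasurableSpace Ω› := tailField_le hmeas 2
  have hGm : Measurable G := hG.mono hm le_rfl
  set i0 : S → ℝ := A0.indicator 1 with hi0def
  set i1 : S → ℝ := A1.indicator 1 with hi1def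
  set i01 : S → ℝ := (A0 ∩ A1).indicator 1 with hi01def
  have hi0m : Measurable i0 := measurable_const.indicator h0
  have hi1m : Measurable i1 := measurable_const.indicator h1
  have hi01m : Measurable i01 := measurable_const.indicator (h0.inter h1)
  set W : Ω → ℝ := fun ω => i1 (ξ 0 ω) + i1 (ξ 1 ω) with hWdef
  have hWt : Measurable[tailField ξ 2] W := by
    have hW2 : W = fun ω => 2 * ((empDist ξ 2 ω) A1).toReal := by
      funext ω
      rw [empDist_toReal ξ 2 ω h1]
      simp only [hWdef, Finset.sum_range_succ, Finset.sum_range_one, hi1def]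
      push_cast; ring
    rw [hW2]
    exact (measurable_tail_apply ξ le_rfl h1).const_mul 2
  have hWm : Measurable W := hWt.mono hm le_rfl
  have hWb : ∀ ω, |W ω| ≤ 2 := fun ω => by
    calc |W ω| ≤ |i1 (ξ 0 ω)| + |i1 (ξ 1 ω)| := abs_add_le _ _
      _ ≤ 1 + 1 := add_le_add (abs_indicator_le_one _ _) (abs_indicator_le_one _ _)
      _ = 2 := by norm_num
  have hGb : ∀ ω, |G ω| ≤ |D| := fun ω => (hGD ω).trans (le_abs_self D)
  have hGWt : Measurable[tailField ξ 2] (fun ω => G ω * W ω) := hG.mul hWt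
  have hGWb : ∀ ω, |G ω * W ω| ≤ |D| * 2 := fun ω => by
    rw [abs_mul]
    exact mul_le_mul (hGb ω) (hWb ω) (abs_nonneg _) (abs_nonneg _)
  -- integrable pieces
  have hint : ∀ (g : S → ℝ), Measurable g → (∀ x, |g x| ≤ 1) → ∀ (j : ℕ) (H : Ω → ℝ),
      Measurable H → (∀ ω, |H ω| ≤ |D| * 2) → Integrable (fun ω => H ω * g (ξ j ω)) P := by
    intro g hg hgb j H hH hHb
    refine bdd_integrable (hH.mul (hg.comp (hmeas j))) (C := |D| * 2 * 1) fun ω => ?_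
    rw [abs_mul]
    exact mul_le_mul (hHb ω) (hgb _) (abs_nonneg _) (by positivity)
  have hGb2 : ∀ ω, |G ω| ≤ |D| * 2 := fun ω => by nlinarith [hGb ω, abs_nonneg D]
  have e1 : (fun ω => G ω * (i0 (ξ 0 ω) * i1 (ξ 1 ω)))
      = fun ω => (G ω * W ω) * i0 (ξ 0 ω) - G ω * i01 (ξ 0 ω) := by
    funext ω
    rw [hi01def, ← indicator_mul_indicator A0 A1 (ξ 0 ω), ← hi0def, ← hi1def]
    simp only [hWdef]; ring
  have e2 : (fun ω => G ω * (i0 (ξ 1 ω) * i1 (ξ 0 ω)))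
      = fun ω => (G ω * W ω) * i0 (ξ 1 ω) - G ω * i01 (ξ 1 ω) := by
    funext ω
    rw [hi01def, ← indicator_mul_indicator A0 A1 (ξ 1 ω), ← hi0def, ← hi1def]
    simp only [hWdef]; ring
  calc ∫ ω, G ω * (i0 (ξ 0 ω) * i1 (ξ 1 ω)) ∂P
      = ∫ ω, (G ω * W ω) * i0 (ξ 0 ω) - G ω * i01 (ξ 0 ω) ∂P := by rw [e1]
    _ = (∫ ω, (G ω * W ω) * i0 (ξ 0 ω) ∂P) - ∫ ω, G ω * i01 (ξ 0 ω) ∂P :=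
        integral_sub (hint i0 hi0m (abs_indicator_le_one _) 0 _ (hGm.mul hWm) hGWb)
          (hint i01 hi01m (abs_indicator_le_one _) 0 _ hGm hGb2)
    _ = (∫ ω, (G ω * W ω) * i0 (ξ 1 ω) ∂P) - ∫ ω, G ω * i01 (ξ 1 ω) ∂P := by
        rw [core hmeas hmart hi0m (abs_indicator_le_one A0) hGWt hGWb,
          core hmeas hmart hi01m (abs_indicator_le_one _) hG hGD]
    _ = ∫ ω, (G ω * W ω) * i0 (ξ 1 ω) - G ω * i01 (ξ 1 ω) ∂P :=
        (integral_sub (hint i0 hi0m (abs_indicator_le_one _) 1 _ (hGm.mul hWm) hGWb)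
          (hint i01 hi01m (abs_indicator_le_one _) 1 _ hGm hGb2)).symm
    _ = ∫ ω, G ω * (i0 (ξ 1 ω) * i1 (ξ 0 ω)) ∂P := by rw [← e2]

lemma prod_indicator_eq (A : Fin 0 → Set S) : True := trivial

lemma prod_ind_eq_indicator {n : ℕ} (A : Fin n → Set S) (τ : Fin n → ℕ)
    (ξ : ℕ → Ω → S) (ω : Ω) :
    (∏ i : Fin n, (A i).indicator (1 : S → ℝ) (ξ (τ i) ω))
      = Set.indicator {ω' | ∀ i : Fin n, ξ (τ i) ω' ∈ A i} 1 ω := by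
  by_cases h : ∀ i : Fin n, ξ (τ i) ω ∈ A i
  · rw [Set.indicator_of_mem (show ω ∈ {ω' | ∀ i : Fin n, ξ (τ i) ω' ∈ A i} from h)]
    exact Finset.prod_eq_one fun i _ => by simp [Set.indicator_of_mem (h i)]
  · rw [Set.indicator_of_notMem (show ω ∉ {ω' | ∀ i : Fin n, ξ (τ i) ω' ∈ A i} from h)]
    push_neg at h
    obtain ⟨i, hi⟩ := h
    exact Finset.prod_eq_zero (Finset.mem_univ i) (by simp [Set.indicator_of_notMem hi])

lemma rect_eq {P : Measure Ω} [IsProbabilityMeasure P] {ξ : ℕ → Ω → S}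
    (hmeas : ∀ i, Measurable (ξ i)) (hmart : IsReverseMVM P ξ)
    {n : ℕ} (hn : 2 ≤ n) (A : Fin n → Set S) (hA : ∀ i, MeasurableSet (A i)) :
    P {ω | ∀ i : Fin n, ξ (Equiv.swap 0 1 (i : ℕ)) ω ∈ A i}
      = P {ω | ∀ i : Fin n, ξ (i : ℕ) ω ∈ A i} := by
  have hmset : ∀ τ : Fin n → ℕ, MeasurableSet {ω | ∀ i : Fin n, ξ (τ i) ω ∈ A i} := by
    intro τ
    have : {ω | ∀ i : Fin n, ξ (τ i) ω ∈ A i} = ⋂ i : Fin n, ξ (τ i) ⁻¹' A i := by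
      ext ω; simp
    rw [this]
    exact MeasurableSet.iInter fun i => (hmeas _) (hA i)
  have hit : ∀ τ : Fin n → ℕ, (P {ω | ∀ i : Fin n, ξ (τ i) ω ∈ A i}).toReal
      = ∫ ω, ∏ i : Fin n, (A i).indicator (1 : S → ℝ) (ξ (τ i) ω) ∂P := by
    intro τ
    rw [← measureReal_def, ← integral_indicator_one (hmset τ)]
    exact (integral_congr_ae (Filter.Eventually.of_forall fun ω =>
      (prod_ind_eq_indicator A τ ξ ω))).symm
  rw [← ENNReal.toReal_eq_toReal_iff' (measure_ne_top P _) (measure_ne_top P _), hit, hit]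
  -- split the product
  set i0 : Fin n := ⟨0, by omega⟩
  set i1 : Fin n := ⟨1, by omega⟩
  have h01 : i0 ≠ i1 := by simp [i0, i1, Fin.ext_iff]
  set T : Finset (Fin n) := Finset.univ \ {i0, i1} with hT
  have hsplit : ∀ (g : Fin n → ℝ), ∏ i : Fin n, g i = g i0 * (g i1 * ∏ i ∈ T, g i) := by
    intro g
    have huniv : (Finset.univ : Finset (Fin n)) = insert i0 (insert i1 T) := by
      ext i; by_cases h0 : i = i0 <;> by_cases h1 : i = i1 <;> simp [hT, h0, h1]
    rw [huniv, Finset.prod_insert (by simp [hT, h01]), Finset.prod_insert (by simp [hT])]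
  have hTval : ∀ i ∈ T, (i : ℕ) ≠ 0 ∧ (i : ℕ) ≠ 1 := by
    intro i hi
    simp only [hT, Finset.mem_sdiff, Finset.mem_univ, Finset.mem_insert,
      Finset.mem_singleton, true_and, not_or] at hi
    exact ⟨fun h => hi.1 (Fin.ext h), fun h => hi.2 (Fin.ext h)⟩
  set Gp : Ω → ℝ := fun ω => ∏ i ∈ T, (A i).indicator (1 : S → ℝ) (ξ (i : ℕ) ω) with hGp
  have hGpt : Measurable[tailField ξ 2] Gp := by
    refine Finset.measurable_prod T fun i hi => ?_
    have h2 : 2 ≤ (i : ℕ) := by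
      have := hTval i hi; omega
    exact (measurable_const.indicator (hA i)).comp (measurable_xi_tail h2)
  have hGpb : ∀ ω, |Gp ω| ≤ 1 := by
    intro ω
    rw [abs_le]
    constructor
    · have : (0:ℝ) ≤ Gp ω := Finset.prod_nonneg fun i _ => Set.indicator_nonneg (fun _ _ => zero_le_one) _
      linarith
    · exact Finset.prod_le_one (fun i _ => Set.indicator_nonneg (fun _ _ => zero_le_one) _)
        (fun (i : Fin n) _ => (abs_le.mp (abs_indicator_le_one (A i) (ξ (i:ℕ) ω))).2)
  have hswap0 : Equiv.swap (0:ℕ) 1 ((i0 : ℕ)) = 1 := Equiv.swap_apply_left 0 1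
  have hswap1 : Equiv.swap (0:ℕ) 1 ((i1 : ℕ)) = 0 := Equiv.swap_apply_right 0 1
  have e1 : ∀ ω, (∏ i : Fin n, (A i).indicator (1 : S → ℝ) (ξ (Equiv.swap 0 1 (i : ℕ)) ω))
      = Gp ω * ((A i0).indicator (1 : S → ℝ) (ξ 1 ω)
          * (A i1).indicator (1 : S → ℝ) (ξ 0 ω)) := by
    intro ω
    rw [hsplit (fun i => (A i).indicator (1 : S → ℝ) (ξ (Equiv.swap 0 1 (i : ℕ)) ω)),
      hswap0, hswap1]
    have hTsame : ∀ i ∈ T, (A i).indicator (1 : S → ℝ) (ξ (Equiv.swap 0 1 (i : ℕ)) ω)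
        = (A i).indicator (1 : S → ℝ) (ξ (i : ℕ) ω) := by
      intro i hi
      rw [Equiv.swap_apply_of_ne_of_ne (hTval i hi).1 (hTval i hi).2]
    rw [Finset.prod_congr rfl hTsame]
    simp only [hGp]; ring
  have e2 : ∀ ω, (∏ i : Fin n, (A i).indicator (1 : S → ℝ) (ξ (i : ℕ) ω))
      = Gp ω * ((A i0).indicator (1 : S → ℝ) (ξ 0 ω)
          * (A i1).indicator (1 : S → ℝ) (ξ 1 ω)) := by
    intro ω
    rw [hsplit (fun i => (A i).indicator (1 : S → ℝ) (ξ (i : ℕ) ω))]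
    simp only [hGp]; ring
  calc ∫ ω, ∏ i : Fin n, (A i).indicator (1 : S → ℝ) (ξ (Equiv.swap 0 1 (i : ℕ)) ω) ∂P
      = ∫ ω, Gp ω * ((A i0).indicator (1 : S → ℝ) (ξ 1 ω)
          * (A i1).indicator (1 : S → ℝ) (ξ 0 ω)) ∂P :=
        integral_congr_ae (Filter.Eventually.of_forall e1)
    _ = ∫ ω, Gp ω * ((A i0).indicator (1 : S → ℝ) (ξ 0 ω)
          * (A i1).indicator (1 : S → ℝ) (ξ 1 ω)) ∂P :=
        (swap_two hmeas hmart (hA i0) (hA i1) hGpt hGpb).symm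
    _ = ∫ ω, ∏ i : Fin n, (A i).indicator (1 : S → ℝ) (ξ (i : ℕ) ω) ∂P :=
        (integral_congr_ae (Filter.Eventually.of_forall e2)).symm

lemma fdd {P : Measure Ω} [IsProbabilityMeasure P] {ξ : ℕ → Ω → S}
    (hmeas : ∀ i, Measurable (ξ i)) (hmart : IsReverseMVM P ξ)
    {n : ℕ} (hn : 2 ≤ n) :
    Measure.map (fun ω (i : Fin n) => ξ (Equiv.swap 0 1 (i : ℕ)) ω) P
      = Measure.map (fun ω (i : Fin n) => ξ (i : ℕ) ω) P := by
  have hXσ : Measurable fun ω (i : Fin n) => ξ (Equiv.swap 0 1 (i : ℕ)) ω :=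
    measurable_pi_lambda _ fun i => hmeas _
  have hX : Measurable fun ω (i : Fin n) => ξ (i : ℕ) ω :=
    measurable_pi_lambda _ fun i => hmeas _
  haveI : IsProbabilityMeasure (Measure.map (fun ω (i : Fin n) => ξ (Equiv.swap 0 1 (i : ℕ)) ω) P) :=
    Measure.isProbabilityMeasure_map hXσ.aemeasurable
  refine MeasureTheory.ext_of_generate_finite _ generateFrom_pi.symm
    isPiSystem_pi ?_ ?_
  · rintro s ⟨A, hA, rfl⟩
    have hAm : ∀ i, MeasurableSet (A i) := fun i => hA i (Set.mem_univ i)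
    have hpiA : MeasurableSet (Set.univ.pi A) := MeasurableSet.univ_pi hAm
    rw [Measure.map_apply hXσ hpiA, Measure.map_apply hX hpiA]
    have e1 : (fun ω (i : Fin n) => ξ (Equiv.swap 0 1 (i : ℕ)) ω) ⁻¹' Set.univ.pi A
        = {ω | ∀ i : Fin n, ξ (Equiv.swap 0 1 (i : ℕ)) ω ∈ A i} := by
      ext ω; simp [Set.mem_pi]
    have e2 : (fun ω (i : Fin n) => ξ (i : ℕ) ω) ⁻¹' Set.univ.pi A
        = {ω | ∀ i : Fin n, ξ (i : ℕ) ω ∈ A i} := by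
      ext ω; simp [Set.mem_pi]
    rw [e1, e2]
    exact rect_eq hmeas hmart hn A hAm
  · rw [Measure.map_apply hXσ MeasurableSet.univ, Measure.map_apply hX MeasurableSet.univ,
      Set.preimage_univ, Set.preimage_univ]

theorem main_statement_aux
    {P : Measure Ω} [IsProbabilityMeasure P] {ξ : ℕ → Ω → S}
    (hmeas : ∀ i, Measurable (ξ i)) (hmart : IsReverseMVM P ξ) :
    Measure.map (fun ω (i : ℕ) => ξ (Equiv.swap 0 1 i) ω) P
      = Measure.map (fun ω (i : ℕ) => ξ i ω) P := by
  classical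
  have hXσ : Measurable fun ω (i : ℕ) => ξ (Equiv.swap 0 1 i) ω :=
    measurable_pi_lambda _ fun i => hmeas _
  have hX : Measurable fun ω (i : ℕ) => ξ i ω :=
    measurable_pi_lambda _ fun i => hmeas _
  haveI : IsProbabilityMeasure (Measure.map (fun ω (i : ℕ) => ξ (Equiv.swap 0 1 i) ω) P) :=
    Measure.isProbabilityMeasure_map hXσ.aemeasurable
  refine MeasureTheory.ext_of_generate_finite _ generateFrom_measurableCylinders.symm
    isPiSystem_measurableCylinders ?_ ?_
  · intro s hs
    obtain ⟨t, u, hu, rfl⟩ := (mem_measurableCylinders s).mp hs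
    set n := t.sup id + 2 with hndef
    have hn : 2 ≤ n := by omega
    have htlt : ∀ i ∈ t, i < n := fun i hi =>
      lt_of_le_of_lt (Finset.le_sup (f := id) hi) (by omega)
    set r : (Fin n → S) → (∀ i : t, S) := fun y i => y ⟨(i : ℕ), htlt i i.2⟩ with hrdef
    have hr : Measurable r := measurable_pi_lambda _ fun i => measurable_pi_apply _
    have hru : MeasurableSet (r ⁻¹' u) := hr hu
    have hXσf : Measurable fun ω (i : Fin n) => ξ (Equiv.swap 0 1 (i : ℕ)) ω :=
      measurable_pi_lambda _ fun i => hmeas _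
    have hXf : Measurable fun ω (i : Fin n) => ξ (i : ℕ) ω :=
      measurable_pi_lambda _ fun i => hmeas _
    have hcylσ : (fun ω (i : ℕ) => ξ (Equiv.swap 0 1 i) ω) ⁻¹' cylinder t u
        = (fun ω (i : Fin n) => ξ (Equiv.swap 0 1 (i : ℕ)) ω) ⁻¹' (r ⁻¹' u) := rfl
    have hcyl : (fun ω (i : ℕ) => ξ i ω) ⁻¹' cylinder t u
        = (fun ω (i : Fin n) => ξ (i : ℕ) ω) ⁻¹' (r ⁻¹' u) := rfl
    rw [Measure.map_apply hXσ hu.cylinder, Measure.map_apply hX hu.cylinder, hcylσ, hcyl,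
      ← Measure.map_apply hXσf hru, ← Measure.map_apply hXf hru, fdd hmeas hmart hn]
  · rw [Measure.map_apply hXσ MeasurableSet.univ, Measure.map_apply hX MeasurableSet.univ,
      Set.preimage_univ, Set.preimage_univ]


end AuxSwapMVM

/-- If the empirical distributions of an infinite sequence in a standard
Borel space form a reverse measure-valued martingale, then the law of the sequence is
invariant under transposing the first two coordinates. -/
theorem map_swap_first_two_of_isReverseMVM
    {Ω S : Type*} [MeasurableSpace Ω] [MeasurableSpace S] [StandardBorelSpace S]
    (P : Measure Ω) [IsProbabilityMeasure P] (ξ : ℕ → Ω → S)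
    (hmeas : ∀ i, Measurable (ξ i)) (hmart : IsReverseMVM P ξ) :
    Measure.map (fun ω (i : ℕ) => ξ (Equiv.swap 0 1 i) ω) P
      = Measure.map (fun ω (i : ℕ) => ξ i ω) P := by
  exact main_statement_aux hmeas hmart
end

section
/- Let ξ = (ξ_1, ξ_2, …) be an infinite sequence of random variables with values in a standard Borel space S, with empirical distributions η_n = n⁻¹ ∑_{i=1}^n δ_{ξ_i}. If η is a reverse measure-valued martingale with respect to the tail σ-fields 𝒯_n = σ(η_n, η_{n+1}, …), then for every k ≥ 1 and every bounded measurable f : S → ℝ, E[f(ξ_k) | 𝒯_k] = η_k f almost surely. -/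
open MeasureTheory ProbabilityTheory
open scoped ENNReal

lemma empDist_integral' {Ω S : Type*} [MeasurableSpace S] (ξ : ℕ → Ω → S) (n : ℕ)
    (f : S → ℝ) (hf : Measurable f) (hb : ∃ C, ∀ x, |f x| ≤ C) (ω : Ω) :
    ∫ x, f x ∂(empDist ξ n ω)
      = (n : ℝ)⁻¹ * ∑ i ∈ Finset.range n, f (ξ i ω) := by
  obtain ⟨C, hC⟩ := hb
  unfold empDist
  rw [integral_smul_measure, integral_finset_sum_measure]
  · simp [integral_dirac' f _ hf.stronglyMeasurable, smul_eq_mul, ENNReal.toReal_inv]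
  · intro i _
    exact Integrable.mono' (integrable_const C) hf.aestronglyMeasurable
      (Filter.Eventually.of_forall fun y => by simpa using hC y)

set_option maxHeartbeats 1000000 in
/-- If the empirical distributions of an infinite sequence in a standard
Borel space form a reverse measure-valued martingale, then for every `k ≥ 1` (one-based) and
every bounded measurable `f`, `E[f(ξ_k) | 𝒯_k] = η_k f` a.s.
(With zero-based indexing the one-based `ξ_k` is `ξ (k - 1)`.) -/
theorem condexp_of_isReverseMVM
    {Ω S : Type*} [MeasurableSpace Ω] [MeasurableSpace S] [StandardBorelSpace S]
    (P : Measure Ω) [IsProbabilityMeasure P] (ξ : ℕ → Ω → S)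
    (hmeas : ∀ i, Measurable (ξ i)) (hmart : IsReverseMVM P ξ) :
    ∀ k : ℕ, 1 ≤ k → ∀ f : S → ℝ, Measurable f → (∃ C, ∀ x, |f x| ≤ C) →
      P[(fun ω => f (ξ (k - 1) ω)) | tailField ξ k]
        =ᵐ[P] fun ω => ∫ x, f x ∂(empDist ξ k ω) := by
  intro k hk f hf hb
  obtain ⟨m, rfl⟩ : ∃ m, k = m + 1 := ⟨k - 1, by omega⟩
  simp only [Nat.add_sub_cancel]
  obtain ⟨C, hC⟩ := hb
  have hA : ∀ n ω, ∫ x, f x ∂(empDist ξ n ω) = (n : ℝ)⁻¹ * ∑ i ∈ Finset.range n, f (ξ i ω) :=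
    fun n ω => empDist_integral' ξ n f hf ⟨C, hC⟩ ω
  rcases Nat.eq_zero_or_pos m with hm | hm
  · subst hm
    have h0 : (fun ω => f (ξ 0 ω)) = fun ω => ∫ x, f x ∂(empDist ξ 1 ω) := by
      funext ω; rw [hA]; simp
    rw [h0]
    exact hmart f hf ⟨C, hC⟩ 1 1 le_rfl le_rfl
  · have hmg : ∀ n : ℕ, Measurable (fun ω => ∫ x, f x ∂(empDist ξ n ω)) := by
      intro n
      have heq : (fun ω => ∫ x, f x ∂(empDist ξ n ω))
          = fun ω => (n : ℝ)⁻¹ * ∑ i ∈ Finset.range n, f (ξ i ω) := funext fun ω => hA n ω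
      rw [heq]
      exact (Finset.measurable_sum _ fun i _ => hf.comp (hmeas i)).const_mul _
    have hbg : ∀ n : ℕ, 1 ≤ n → ∀ ω, ‖∫ x, f x ∂(empDist ξ n ω)‖ ≤ C := by
      intro n hn ω
      rw [Real.norm_eq_abs, hA, abs_mul, abs_of_nonneg (by positivity : (0:ℝ) ≤ (n:ℝ)⁻¹)]
      have h1 : |∑ i ∈ Finset.range n, f (ξ i ω)| ≤ (n : ℝ) * C := by
        calc |∑ i ∈ Finset.range n, f (ξ i ω)| ≤ ∑ i ∈ Finset.range n, |f (ξ i ω)| :=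
              Finset.abs_sum_le_sum_abs _ _
          _ ≤ ∑ _i ∈ Finset.range n, C := Finset.sum_le_sum fun i _ => hC _
          _ = (n : ℝ) * C := by simp [mul_comm]
      have hn' : (0:ℝ) < (n:ℝ) := by exact_mod_cast hn
      calc (n:ℝ)⁻¹ * |∑ i ∈ Finset.range n, f (ξ i ω)| ≤ (n:ℝ)⁻¹ * ((n:ℝ) * C) :=
            mul_le_mul_of_nonneg_left h1 (by positivity)
        _ = C := by field_simp
    have hint : ∀ n : ℕ, 1 ≤ n → Integrable (fun ω => ∫ x, f x ∂(empDist ξ n ω)) P := fun n hn =>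
      Integrable.mono' (integrable_const C) (hmg n).aestronglyMeasurable
        (Filter.Eventually.of_forall (hbg n hn))
    have key : (fun ω => f (ξ m ω))
        = ((m + 1 : ℕ) : ℝ) • (fun ω => ∫ x, f x ∂(empDist ξ (m + 1) ω))
          - ((m : ℕ) : ℝ) • (fun ω => ∫ x, f x ∂(empDist ξ m ω)) := by
      funext ω
      simp only [Pi.sub_apply, Pi.smul_apply, smul_eq_mul, hA]
      rw [← mul_assoc, ← mul_assoc, mul_inv_cancel₀ (by exact_mod_cast Nat.succ_ne_zero m),
        mul_inv_cancel₀ (Nat.cast_ne_zero.mpr (by omega)), one_mul, one_mul,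
        Finset.sum_range_succ]
      ring
    rw [key]
    have h1 := hmart f hf ⟨C, hC⟩ (m + 1) (m + 1) (by omega) le_rfl
    have h2 := hmart f hf ⟨C, hC⟩ m (m + 1) hm (by omega)
    calc P[((m + 1 : ℕ) : ℝ) • (fun ω => ∫ x, f x ∂(empDist ξ (m + 1) ω))
            - ((m : ℕ) : ℝ) • (fun ω => ∫ x, f x ∂(empDist ξ m ω)) | tailField ξ (m + 1)]
        =ᵐ[P] P[((m + 1 : ℕ) : ℝ) • (fun ω => ∫ x, f x ∂(empDist ξ (m + 1) ω)) | tailField ξ (m + 1)]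
            - P[((m : ℕ) : ℝ) • (fun ω => ∫ x, f x ∂(empDist ξ m ω)) | tailField ξ (m + 1)] :=
          condExp_sub ((hint (m + 1) (by omega)).smul _) ((hint m hm).smul _) _
      _ =ᵐ[P] ((m + 1 : ℕ) : ℝ) • P[(fun ω => ∫ x, f x ∂(empDist ξ (m + 1) ω)) | tailField ξ (m + 1)]
            - ((m : ℕ) : ℝ) • P[(fun ω => ∫ x, f x ∂(empDist ξ m ω)) | tailField ξ (m + 1)] :=
          (condExp_smul _ _ _).sub (condExp_smul _ _ _)
      _ =ᵐ[P] fun ω => ∫ x, f x ∂(empDist ξ (m + 1) ω) := by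
          filter_upwards [h1, h2] with ω e1 e2
          simp only [Pi.sub_apply, Pi.smul_apply, smul_eq_mul, e1, e2]
          push_cast
          ring
end

section
/- Let α be a random variable taking the values 1, 0, −1 each with probability 1/3, let (ϑ_n)_{n ≥ 1} be an i.i.d. sequence of Uniform(0,1) random variables independent of α, and define f(a,b) = 1 if a = −1; f(a,b) = 0 if a = 0; f(a,b) = 1 if a = 1 and b < 1/2; f(a,b) = 2 if a = 1 and b ≥ 1/2; set ξ_n = f(α, ϑ_n). Then for every n ≥ 2, the conditional probability P(ξ_1 = 1 | ξ_2 = ξ_3 = ⋯ = ξ_n = 1) equals (2^n + 1)/(2^n + 2); in particular this quantity depends on n, so the exchangeable sequence ξ is not a Markov sequence. -/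
open MeasureTheory ProbabilityTheory
open scoped ENNReal

/-- The function `f` of the example: `f(a,b) = 1` if `a = -1`; `0` if `a = 0`;
`1` if `a = 1` and `b < 1/2`; `2` if `a = 1` and `b ≥ 1/2`. -/
noncomputable def fEx (a : ℤ) (b : ℝ) : ℤ :=
  if a = -1 then 1 else if a = 0 then 0 else if b < 1 / 2 then 1 else 2

/-- `ξ` satisfies the (possibly inhomogeneous) Markov property with respect to its natural
filtration: the conditional expectation of any bounded measurable function of `ξ_{n+1}`
given `σ(ξ_1, …, ξ_n)` only depends on `ξ_n`. -/
def IsMarkovSeq {Ω S : Type*} [MeasurableSpace Ω] [MeasurableSpace S]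
    (P : Measure Ω) (ξ : ℕ → Ω → S) : Prop :=
  ∀ n : ℕ, ∀ f : S → ℝ, Measurable f → (∃ C, ∀ x, |f x| ≤ C) →
    P[(fun ω => f (ξ (n + 1) ω)) |
        MeasurableSpace.comap (fun ω (i : Fin (n + 1)) => ξ (i : ℕ) ω) inferInstance]
      =ᵐ[P] P[(fun ω => f (ξ (n + 1) ω)) | MeasurableSpace.comap (ξ n) inferInstance]


lemma fEx_meas {Ω : Type*} [MeasurableSpace Ω] {α : Ω → ℤ} {t : Ω → ℝ}
    (hα : Measurable α) (ht : Measurable t) :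
    Measurable (fun ω => fEx (α ω) (t ω)) := by
  unfold fEx
  exact Measurable.ite (measurableSet_eq_fun hα measurable_const) measurable_const
    (Measurable.ite (measurableSet_eq_fun hα measurable_const) measurable_const
      (Measurable.ite (measurableSet_lt ht measurable_const) measurable_const measurable_const))

lemma fEx_neg_one (b : ℝ) : fEx (-1) b = 1 := by norm_num [fEx]

lemma fEx_zero (b : ℝ) : fEx 0 b = 0 := by norm_num [fEx]

lemma fEx_one_eq_one {b : ℝ} : fEx 1 b = 1 ↔ b < 1/2 := by norm_num [fEx]

lemma key_prob {Ω : Type*} [MeasurableSpace Ω] (P : Measure Ω) [IsProbabilityMeasure P]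
    (α : Ω → ℤ) (ϑ : ℕ → Ω → ℝ)
    (hαmeas : Measurable α) (hϑmeas : ∀ n, Measurable (ϑ n))
    (hα : Measure.map α P
      = (3 : ℝ≥0∞)⁻¹ • (Measure.dirac 1 + Measure.dirac 0 + Measure.dirac (-1)))
    (hϑ : ∀ n, Measure.map (ϑ n) P = volume.restrict (Set.Ioo (0 : ℝ) 1))
    (hϑindep : iIndepFun ϑ P)
    (hindep : IndepFun α (fun ω (n : ℕ) => ϑ n ω) P)
    (I : Finset ℕ) (hI : I.Nonempty) :
    P {ω | ∀ i ∈ I, fEx (α ω) (ϑ i ω) = 1} = 3⁻¹ + 3⁻¹ * 2⁻¹ ^ I.card := by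
  -- basic values
  have hα1 : P (α ⁻¹' {1}) = 3⁻¹ := by
    rw [← Measure.map_apply hαmeas (by trivial), hα]
    simp [Measure.dirac_apply, Set.indicator]
  have hαm1 : P (α ⁻¹' {-1}) = 3⁻¹ := by
    rw [← Measure.map_apply hαmeas (by trivial), hα]
    simp [Measure.dirac_apply, Set.indicator]
  have hN : P (α ⁻¹' ({-1, 0, 1} : Set ℤ)ᶜ) = 0 := by
    rw [← Measure.map_apply hαmeas (by trivial), hα]
    simp [Measure.dirac_apply, Set.indicator]
  -- the ϑ events
  have hhalf : ∀ i, P (ϑ i ⁻¹' Set.Iio (1/2 : ℝ)) = 2⁻¹ := by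
    intro i
    rw [← Measure.map_apply (hϑmeas i) measurableSet_Iio, hϑ i,
      Measure.restrict_apply measurableSet_Iio]
    have : Set.Iio (1/2 : ℝ) ∩ Set.Ioo 0 1 = Set.Ioo 0 (1/2) := by
      ext x
      simp only [Set.mem_inter_iff, Set.mem_Iio, Set.mem_Ioo]
      constructor
      · rintro ⟨h1, h2, h3⟩; exact ⟨h2, h1⟩
      · rintro ⟨h1, h2⟩; exact ⟨h2, h1, by linarith⟩
    rw [this, Real.volume_Ioo, show (1/2 - 0 : ℝ) = (2 : ℝ)⁻¹ by norm_num,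
      ENNReal.ofReal_inv_of_pos (by norm_num : (0:ℝ) < 2)]
    norm_num
  have hC : P (⋂ i ∈ I, ϑ i ⁻¹' Set.Iio (1/2 : ℝ)) = 2⁻¹ ^ I.card := by
    rw [hϑindep.measure_inter_preimage_eq_mul I
      (sets := fun _ => Set.Iio (1/2 : ℝ)) (fun i _ => measurableSet_Iio)]
    rw [Finset.prod_congr rfl (fun i _ => hhalf i), Finset.prod_const]
  set C : Set Ω := ⋂ i ∈ I, ϑ i ⁻¹' Set.Iio (1/2 : ℝ) with hCdef
  have hCmeas : MeasurableSet C :=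
    MeasurableSet.biInter I.countable_toSet (fun i _ => hϑmeas i measurableSet_Iio)
  have hAC : P (α ⁻¹' {1} ∩ C) = 3⁻¹ * 2⁻¹ ^ I.card := by
    have hCeq : C = (fun ω (n : ℕ) => ϑ n ω) ⁻¹'
        (⋂ i ∈ I, (fun g : ℕ → ℝ => g i) ⁻¹' Set.Iio (1/2 : ℝ)) := by
      rw [hCdef]
      simp only [Set.preimage_iInter]
      rfl
    have hT : MeasurableSet (⋂ i ∈ I, (fun g : ℕ → ℝ => g i) ⁻¹' Set.Iio (1/2 : ℝ)) :=
      MeasurableSet.biInter I.countable_toSet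
        (fun i _ => (measurable_pi_apply i) measurableSet_Iio)
    rw [hCeq, hindep.measure_inter_preimage_eq_mul _ _ (by trivial) hT, hα1, ← hCeq, hC]
  set D : Set Ω := α ⁻¹' {-1} ∪ (α ⁻¹' {1} ∩ C) with hDdef
  have hDE : D ⊆ {ω | ∀ i ∈ I, fEx (α ω) (ϑ i ω) = 1} := by
    rintro ω (hω | ⟨hω1, hωC⟩) i hi
    · rw [show α ω = -1 from hω, fEx_neg_one]
    · rw [show α ω = 1 from hω1, fEx_one_eq_one]
      exact Set.mem_iInter₂.1 hωC i hi
  have hED : {ω | ∀ i ∈ I, fEx (α ω) (ϑ i ω) = 1} \ D ⊆ α ⁻¹' ({-1, 0, 1} : Set ℤ)ᶜ := by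
    rintro ω ⟨hE, hD⟩
    simp only [Set.mem_preimage, Set.mem_compl_iff, Set.mem_insert_iff,
      Set.mem_singleton_iff]
    rintro (h | h | h)
    · exact hD (Or.inl h)
    · obtain ⟨i, hi⟩ := hI
      have := hE i hi
      rw [h, fEx_zero] at this
      exact absurd this (by norm_num)
    · refine hD (Or.inr ⟨h, ?_⟩)
      refine Set.mem_iInter₂.2 fun i hi => ?_
      have := hE i hi
      rw [h, fEx_one_eq_one] at this
      exact this
  have hPE : P {ω | ∀ i ∈ I, fEx (α ω) (ϑ i ω) = 1} = P D := by
    refine measure_congr (MeasureTheory.ae_eq_set.2 ⟨measure_mono_null hED hN, ?_⟩)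
    rw [Set.diff_eq_empty.2 hDE]
    exact measure_empty
  have hdisj : Disjoint (α ⁻¹' {-1}) (α ⁻¹' {1} ∩ C) := by
    refine Set.disjoint_left.2 fun ω h1 h2 => ?_
    have ha : α ω = -1 := h1
    have hb : α ω = 1 := h2.1
    rw [ha] at hb
    norm_num at hb
  rw [hPE, hDdef, measure_union hdisj ((hαmeas (by trivial)).inter hCmeas), hαm1, hAC]


lemma aux_ne_top (k : ℕ) : ((3:ℝ≥0∞)⁻¹ + 3⁻¹ * 2⁻¹ ^ k) ≠ ⊤ :=
  ENNReal.add_ne_top.2 ⟨ENNReal.inv_ne_top.2 (by norm_num),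
    ENNReal.mul_ne_top (ENNReal.inv_ne_top.2 (by norm_num))
      (ENNReal.pow_ne_top (ENNReal.inv_ne_top.2 (by norm_num)))⟩

lemma aux_ne_zero (k : ℕ) : ((3:ℝ≥0∞)⁻¹ + 3⁻¹ * 2⁻¹ ^ k) ≠ 0 := by
  simp [ENNReal.inv_ne_top]

lemma ratio (n : ℕ) (hn : 2 ≤ n) :
    ((3:ℝ≥0∞)⁻¹ + 3⁻¹ * 2⁻¹ ^ n) / (3⁻¹ + 3⁻¹ * 2⁻¹ ^ (n-1))
      = ((2:ℝ≥0∞) ^ n + 1) / ((2:ℝ≥0∞) ^ n + 2) := by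
  obtain ⟨m, rfl⟩ : ∃ m, n = m + 1 := ⟨n - 1, by omega⟩
  have h2t : ((2:ℝ≥0∞) ^ (m+1)) ≠ ⊤ := ENNReal.pow_ne_top (by norm_num)
  have h3 : ((2:ℝ≥0∞) ^ (m+1) + 1) ≠ ⊤ := ENNReal.add_ne_top.2 ⟨h2t, by norm_num⟩
  have h4 : ((2:ℝ≥0∞) ^ (m+1) + 2) ≠ ⊤ := ENNReal.add_ne_top.2 ⟨h2t, by norm_num⟩
  refine (ENNReal.toReal_eq_toReal_iff' ?_ ?_).1 ?_
  · exact (ENNReal.div_lt_top (aux_ne_top _) (aux_ne_zero _)).ne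
  · exact (ENNReal.div_lt_top h3 (by simp)).ne
  rw [ENNReal.toReal_div, ENNReal.toReal_div,
    ENNReal.toReal_add (ENNReal.inv_ne_top.2 (by norm_num))
      (ENNReal.mul_ne_top (ENNReal.inv_ne_top.2 (by norm_num))
        (ENNReal.pow_ne_top (ENNReal.inv_ne_top.2 (by norm_num)))),
    ENNReal.toReal_add (ENNReal.inv_ne_top.2 (by norm_num))
      (ENNReal.mul_ne_top (ENNReal.inv_ne_top.2 (by norm_num))
        (ENNReal.pow_ne_top (ENNReal.inv_ne_top.2 (by norm_num)))),
    ENNReal.toReal_add h2t (by norm_num), ENNReal.toReal_add h2t (by norm_num)]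
  simp only [ENNReal.toReal_mul, ENNReal.toReal_pow, ENNReal.toReal_inv, ENNReal.toReal_ofNat,
    ENNReal.toReal_one, Nat.add_sub_cancel]
  rw [pow_succ]
  have hp : (0:ℝ) < 2 ^ m := by positivity
  rw [div_eq_div_iff (by positivity) (by positivity)]
  field_simp
  have hq : ((1:ℝ)/2)^m * 2^m = 1 := by rw [← mul_pow]; norm_num
  linear_combination (-2:ℝ) * hq


lemma not_markov_aux {Ω : Type*} [MeasurableSpace Ω] (P : Measure Ω) [IsProbabilityMeasure P]
    (ξ : ℕ → Ω → ℤ) (hmeasξ : ∀ n, Measurable (ξ n))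
    (key : ∀ I : Finset ℕ, I.Nonempty →
      P {ω | ∀ i ∈ I, ξ i ω = 1} = 3⁻¹ + 3⁻¹ * 2⁻¹ ^ I.card)
    (hM : ∀ n : ℕ, ∀ f : ℤ → ℝ, Measurable f → (∃ C, ∀ x, |f x| ≤ C) →
      P[(fun ω => f (ξ (n + 1) ω)) |
          MeasurableSpace.comap (fun ω (i : Fin (n + 1)) => ξ (i : ℕ) ω) inferInstance]
        =ᵐ[P] P[(fun ω => f (ξ (n + 1) ω)) | MeasurableSpace.comap (ξ n) inferInstance]) :
    False := by
  classical
  set f : ℤ → ℝ := fun x => if x = 1 then 1 else 0 with hfdef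
  have hfm : Measurable f := measurable_from_top
  have hfb : ∃ C, ∀ x, |f x| ≤ C := ⟨1, fun x => by by_cases h : x = 1 <;> simp [hfdef, h]⟩
  have h : P[(fun ω => f (ξ 2 ω)) |
          MeasurableSpace.comap (fun ω (i : Fin (1 + 1)) => ξ (i : ℕ) ω) inferInstance]
        =ᵐ[P] P[(fun ω => f (ξ 2 ω)) | MeasurableSpace.comap (ξ 1) inferInstance] :=
    hM 1 f hfm hfb
  set S : Set Ω := {ω | ξ 2 ω = 1} with hSdef
  set B : Set Ω := {ω | ξ 1 ω = 1} with hBdef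
  set A : Set Ω := {ω | ξ 0 ω = 1} ∩ B with hAdef
  have hSmeas : MeasurableSet S := hmeasξ 2 (by trivial : MeasurableSet ({1} : Set ℤ))
  have hBmeas : MeasurableSet B := hmeasξ 1 (by trivial : MeasurableSet ({1} : Set ℤ))
  have hAmeas : MeasurableSet A :=
    (hmeasξ 0 (by trivial : MeasurableSet ({1} : Set ℤ))).inter hBmeas
  have hm1le : MeasurableSpace.comap (ξ 1) inferInstance ≤ ‹MeasurableSpace Ω› :=
    (hmeasξ 1).comap_le
  have hm2le : MeasurableSpace.comap (fun ω (i : Fin (1 + 1)) => ξ (i : ℕ) ω) inferInstance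
      ≤ ‹MeasurableSpace Ω› :=
    (measurable_pi_lambda _ fun i : Fin (1+1) => hmeasξ i).comap_le
  have hInt : Integrable (fun ω => f (ξ 2 ω)) P := by
    have : (fun ω => f (ξ 2 ω)) = S.indicator (fun _ => (1:ℝ)) := by
      ext ω
      by_cases hω : ξ 2 ω = 1 <;> simp [hfdef, hω, hSdef, Set.indicator, Set.mem_setOf_eq]
    rw [this]
    exact (integrable_const 1).indicator hSmeas
  -- set-integrals of the integrand
  have hsetint : ∀ s : Set Ω, MeasurableSet s →
      ∫ ω in s, f (ξ 2 ω) ∂P = (P (S ∩ s)).toReal := by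
    intro s hs
    rw [setIntegral_congr_fun hs (fun ω _ => show f (ξ 2 ω) = S.indicator (fun _ => (1:ℝ)) ω by
      by_cases hω : ξ 2 ω = 1 <;> simp [hfdef, hω, hSdef, Set.indicator, Set.mem_setOf_eq])]
    rw [setIntegral_indicator hSmeas]
    simp [Set.inter_comm]
    rfl
  have hB_m1 : MeasurableSet[MeasurableSpace.comap (ξ 1) inferInstance] B :=
    MeasurableSpace.measurableSet_comap.2 ⟨{1}, trivial, rfl⟩
  have hA_m2 : MeasurableSet[MeasurableSpace.comap
      (fun ω (i : Fin (1 + 1)) => ξ (i : ℕ) ω) inferInstance] A := by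
    refine MeasurableSpace.measurableSet_comap.2
      ⟨(fun v : Fin (1+1) → ℤ => v 0) ⁻¹' {1} ∩ (fun v : Fin (1+1) → ℤ => v 1) ⁻¹' {1},
        ((measurable_pi_apply 0) (by trivial : MeasurableSet ({1} : Set ℤ))).inter
          ((measurable_pi_apply 1) (by trivial : MeasurableSet ({1} : Set ℤ))), ?_⟩
    ext ω
    simp [hAdef, hBdef, Set.mem_preimage, Set.mem_inter_iff, Set.mem_setOf_eq]
  set g : Ω → ℝ := P[(fun ω => f (ξ 2 ω)) | MeasurableSpace.comap (ξ 1) inferInstance]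
    with hgdef
  have hg_meas : Measurable[MeasurableSpace.comap (ξ 1) inferInstance] g :=
    stronglyMeasurable_condExp.measurable
  have hg_const : ∀ ω ω', ξ 1 ω = ξ 1 ω' → g ω = g ω' := by
    intro ω ω' hee
    obtain ⟨t, ht, hpre⟩ :=
      MeasurableSpace.measurableSet_comap.1 (hg_meas (measurableSet_singleton (g ω)))
    have hω : ω ∈ ξ 1 ⁻¹' t := by rw [hpre]; exact rfl
    have hω' : ω' ∈ ξ 1 ⁻¹' t := by rw [Set.mem_preimage, ← hee]; exact hω
    rw [hpre] at hω'
    exact (hω' : g ω' = g ω).symm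
  have hPB : P B = 3⁻¹ + 3⁻¹ * 2⁻¹ ^ 1 := by
    have hBe : B = {ω | ∀ i ∈ ({1} : Finset ℕ), ξ i ω = 1} := by ext ω; simp [hBdef]
    rw [hBe, key _ ⟨1, by simp⟩]; rfl
  have hBne : B.Nonempty := by
    apply nonempty_of_measure_ne_zero (μ := P)
    rw [hPB]
    simp [ENNReal.inv_ne_top]
  obtain ⟨ω₀, hω₀⟩ := hBne
  set c : ℝ := g ω₀ with hcdef
  have hgB : ∀ ω ∈ B, g ω = c := fun ω hω => hg_const ω ω₀ (by
    have h1 : ξ 1 ω = 1 := hω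
    have h2 : ξ 1 ω₀ = 1 := hω₀
    rw [h1, h2])
  have hB_int : (P B).toReal • c = (P (S ∩ B)).toReal := by
    have h1 : ∫ ω in B, g ω ∂P = (P B).toReal • c := by
      rw [setIntegral_congr_fun hBmeas (fun ω hω => hgB ω hω), setIntegral_const]
      rfl
    rw [← h1, hgdef, setIntegral_condExp hm1le hInt hB_m1, hsetint B hBmeas]
  have hA_int : (P A).toReal • c = (P (S ∩ A)).toReal := by
    have h1 : ∫ ω in A, g ω ∂P = (P A).toReal • c := by
      rw [setIntegral_congr_fun hAmeas (fun ω hω => hgB ω hω.2), setIntegral_const]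
      rfl
    have h2 : ∫ ω in A, g ω ∂P = ∫ ω in A,
        (P[(fun ω => f (ξ 2 ω)) | MeasurableSpace.comap
          (fun ω (i : Fin (1 + 1)) => ξ (i : ℕ) ω) inferInstance]) ω ∂P :=
      integral_congr_ae (ae_restrict_of_ae (Filter.EventuallyEq.symm h))
    rw [← h1, h2, setIntegral_condExp hm2le hInt hA_m2, hsetint A hAmeas]
  have hPA : P A = 3⁻¹ + 3⁻¹ * 2⁻¹ ^ 2 := by
    have hAe : A = {ω | ∀ i ∈ ({0, 1} : Finset ℕ), ξ i ω = 1} := by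
      ext ω
      simp only [hAdef, hBdef, Set.mem_inter_iff, Set.mem_setOf_eq, Finset.mem_insert,
        Finset.mem_singleton]
      constructor
      · rintro ⟨h0, h1⟩ i hi
        rcases hi with rfl | rfl <;> assumption
      · intro hh
        exact ⟨hh 0 (by norm_num), hh 1 (by norm_num)⟩
    rw [hAe, key _ ⟨0, by simp⟩]; rfl
  have hPSB : P (S ∩ B) = 3⁻¹ + 3⁻¹ * 2⁻¹ ^ 2 := by
    have hSBe : S ∩ B = {ω | ∀ i ∈ ({1, 2} : Finset ℕ), ξ i ω = 1} := by
      ext ω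
      simp only [hSdef, hBdef, Set.mem_inter_iff, Set.mem_setOf_eq, Finset.mem_insert,
        Finset.mem_singleton]
      constructor
      · rintro ⟨h2, h1⟩ i hi
        rcases hi with rfl | rfl <;> assumption
      · intro hh
        exact ⟨hh 2 (by norm_num), hh 1 (by norm_num)⟩
    rw [hSBe, key _ ⟨1, by simp⟩]; rfl
  have hPSA : P (S ∩ A) = 3⁻¹ + 3⁻¹ * 2⁻¹ ^ 3 := by
    have hSAe : S ∩ A = {ω | ∀ i ∈ ({0, 1, 2} : Finset ℕ), ξ i ω = 1} := by
      ext ω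
      simp only [hSdef, hAdef, hBdef, Set.mem_inter_iff, Set.mem_setOf_eq, Finset.mem_insert,
        Finset.mem_singleton]
      constructor
      · rintro ⟨h2, h0, h1⟩ i hi
        rcases hi with rfl | rfl | rfl <;> assumption
      · intro hh
        exact ⟨hh 2 (by norm_num), hh 0 (by norm_num), hh 1 (by norm_num)⟩
    rw [hSAe, key _ ⟨0, by simp⟩]; rfl
  have htR : ∀ k : ℕ, ((3:ℝ≥0∞)⁻¹ + 3⁻¹ * 2⁻¹ ^ k).toReal = 3⁻¹ + 3⁻¹ * 2⁻¹ ^ k := by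
    intro k
    rw [ENNReal.toReal_add (ENNReal.inv_ne_top.2 (by norm_num))
        (ENNReal.mul_ne_top (ENNReal.inv_ne_top.2 (by norm_num))
          (ENNReal.pow_ne_top (ENNReal.inv_ne_top.2 (by norm_num))))]
    simp [ENNReal.toReal_inv]
  rw [hPB, hPSB, htR, htR] at hB_int
  rw [hPA, hPSA, htR, htR] at hA_int
  norm_num [smul_eq_mul] at hB_int hA_int
  linarith

/-- With `α` uniform on `{1, 0, -1}`, `(ϑ_n)` i.i.d. `Uniform(0,1)`
independent of `α`, and `ξ_n = f(α, ϑ_n)` (indexed from `0`), for every `n ≥ 2` the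
conditional probability `P(ξ_1 = 1 | ξ_2 = ⋯ = ξ_n = 1)` equals `(2^n + 1)/(2^n + 2)`;
in particular, since this depends on `n`, the exchangeable sequence `ξ` is not Markov. -/
theorem condProb_fEx_and_not_markov
    {Ω : Type*} [MeasurableSpace Ω] (P : Measure Ω) [IsProbabilityMeasure P]
    (α : Ω → ℤ) (ϑ : ℕ → Ω → ℝ)
    (hαmeas : Measurable α) (hϑmeas : ∀ n, Measurable (ϑ n))
    (hα : Measure.map α P
      = (3 : ℝ≥0∞)⁻¹ • (Measure.dirac 1 + Measure.dirac 0 + Measure.dirac (-1)))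
    (hϑ : ∀ n, Measure.map (ϑ n) P = volume.restrict (Set.Ioo (0 : ℝ) 1))
    (hϑindep : iIndepFun ϑ P)
    (hindep : IndepFun α (fun ω (n : ℕ) => ϑ n ω) P) :
    (∀ n : ℕ, 2 ≤ n →
      P ({ω | fEx (α ω) (ϑ 0 ω) = 1} ∩ {ω | ∀ i, 1 ≤ i → i < n → fEx (α ω) (ϑ i ω) = 1})
          / P {ω | ∀ i, 1 ≤ i → i < n → fEx (α ω) (ϑ i ω) = 1}
        = ((2 : ℝ≥0∞) ^ n + 1) / ((2 : ℝ≥0∞) ^ n + 2)) ∧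
    ¬ IsMarkovSeq P (fun n ω => fEx (α ω) (ϑ n ω)) := by
  have key : ∀ I : Finset ℕ, I.Nonempty →
      P {ω | ∀ i ∈ I, fEx (α ω) (ϑ i ω) = 1} = 3⁻¹ + 3⁻¹ * 2⁻¹ ^ I.card :=
    key_prob P α ϑ hαmeas hϑmeas hα hϑ hϑindep hindep
  constructor
  · intro n hn
    have hset1 : {ω | fEx (α ω) (ϑ 0 ω) = 1}
          ∩ {ω | ∀ i, 1 ≤ i → i < n → fEx (α ω) (ϑ i ω) = 1}
        = {ω | ∀ i ∈ Finset.range n, fEx (α ω) (ϑ i ω) = 1} := by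
      ext ω
      simp only [Set.mem_inter_iff, Set.mem_setOf_eq, Finset.mem_range]
      constructor
      · rintro ⟨h0, hr⟩ i hi
        rcases Nat.eq_zero_or_pos i with hz | hz
        · subst hz; exact h0
        · exact hr i hz hi
      · intro hh
        exact ⟨hh 0 (by omega), fun i h1 h2 => hh i h2⟩
    have hset2 : {ω | ∀ i, 1 ≤ i → i < n → fEx (α ω) (ϑ i ω) = 1}
        = {ω | ∀ i ∈ Finset.Ico 1 n, fEx (α ω) (ϑ i ω) = 1} := by
      ext ω
      simp only [Set.mem_setOf_eq, Finset.mem_Ico]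
      constructor
      · intro hh i hi
        exact hh i hi.1 hi.2
      · intro hh i h1 h2
        exact hh i ⟨h1, h2⟩
    rw [hset1, hset2, key _ ⟨0, Finset.mem_range.2 (by omega)⟩,
      key _ ⟨1, Finset.mem_Ico.2 ⟨le_refl 1, by omega⟩⟩, Finset.card_range, Nat.card_Ico]
    exact ratio n hn
  · intro hM
    exact not_markov_aux P (fun n ω => fEx (α ω) (ϑ n ω))
      (fun n => fEx_meas hαmeas (hϑmeas n)) key (hM)
end

section
/- Let X : ℕ × ℕ → S be a finite or infinite separately exchangeable random matrix with values in a standard Borel space S, with empirical distributions η_{n,m} = (nm)⁻¹ ∑_{i ≤ n} ∑_{j ≤ m} δ_{X_{i,j}}. Then η is a reverse measure-valued martingale on ℕ²: for every bounded measurable f : S → ℝ and all k ≤ n, l ≤ m, E[η_{k,l} f | 𝒯_{n,m}] = η_{n,m} f almost surely, where 𝒯_{n,m} = σ(η_{u,v} : u ≥ n, v ≥ m). -/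
open MeasureTheory ProbabilityTheory
open scoped ENNReal

/-- The empirical distribution `η_{n,m} = (nm)⁻¹ ∑_{i ≤ n} ∑_{j ≤ m} δ_{X_{i,j}}` of the upper
left `n × m` corner of the random matrix `X` (indexed from `0`). -/
noncomputable def empDist2 {Ω S : Type*} [MeasurableSpace S] (X : ℕ → ℕ → Ω → S)
    (n m : ℕ) (ω : Ω) : Measure S :=
  ((n * m : ℕ) : ℝ≥0∞)⁻¹ •
    ∑ i ∈ Finset.range n, ∑ j ∈ Finset.range m, Measure.dirac (X i j ω)

/-- The σ-field `𝒯_{n,m} = σ(η_{u,v} : u ≥ n, v ≥ m)`. -/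
noncomputable def tailField2 {Ω S : Type*} [MeasurableSpace S] (X : ℕ → ℕ → Ω → S)
    (n m : ℕ) : MeasurableSpace Ω :=
  ⨆ u, ⨆ _ : n ≤ u, ⨆ v, ⨆ _ : m ≤ v, MeasurableSpace.comap (empDist2 X u v) inferInstance

/-- `η_{·,·}` is a reverse measure-valued martingale on `ℕ²`: for bounded measurable `f` and
all `1 ≤ k ≤ n`, `1 ≤ l ≤ m`, `E[η_{k,l} f | 𝒯_{n,m}] = η_{n,m} f` a.s. -/
def IsReverseMVM2 {Ω S : Type*} [MeasurableSpace Ω] [MeasurableSpace S]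
    (P : Measure Ω) (X : ℕ → ℕ → Ω → S) : Prop :=
  ∀ f : S → ℝ, Measurable f → (∃ C, ∀ x, |f x| ≤ C) →
    ∀ k l n m : ℕ, 1 ≤ k → k ≤ n → 1 ≤ l → l ≤ m →
      P[(fun ω => ∫ x, f x ∂(empDist2 X k l ω)) | tailField2 X n m]
        =ᵐ[P] fun ω => ∫ x, f x ∂(empDist2 X n m ω)

/-- `X` is separately exchangeable: its law is invariant under arbitrary permutations of the
rows and of the columns. -/
def SepExchangeable {Ω S : Type*} [MeasurableSpace Ω] [MeasurableSpace S]
    (P : Measure Ω) (X : ℕ → ℕ → Ω → S) : Prop :=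
  ∀ p q : Equiv.Perm ℕ,
    Measure.map (fun ω (ij : ℕ × ℕ) => X (p ij.1) (q ij.2) ω) P
      = Measure.map (fun ω (ij : ℕ × ℕ) => X ij.1 ij.2 ω) P


section SepExchAux

open MeasureTheory

variable {Ω S : Type*} [MeasurableSpace Ω] [MeasurableSpace S]

/-- Empirical distribution of an abstract matrix `x : ℕ × ℕ → S`. -/
noncomputable def SE2.empOf (u v : ℕ) (x : ℕ × ℕ → S) : Measure S :=
  ((u * v : ℕ) : ℝ≥0∞)⁻¹ •
    ∑ i ∈ Finset.range u, ∑ j ∈ Finset.range v, Measure.dirac (x (i, j))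

lemma SE2.empDist2_eq_empOf (X : ℕ → ℕ → Ω → S) (u v : ℕ) :
    empDist2 X u v = fun ω => SE2.empOf u v (fun ij => X ij.1 ij.2 ω) := rfl

lemma SE2.measurable_empDist2 (X : ℕ → ℕ → Ω → S) (hmeas : ∀ i j, Measurable (X i j))
    (u v : ℕ) : Measurable (empDist2 X u v) := by
  apply Measure.measurable_of_measurable_coe
  intro s hs
  simp only [empDist2, Measure.smul_apply, Measure.finset_sum_apply,
    Measure.dirac_apply' _ hs, smul_eq_mul]
  exact (Finset.measurable_sum _ fun i _ => Finset.measurable_sum _ fun j _ =>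
    (measurable_one.indicator hs).comp (hmeas i j)).const_mul _

lemma SE2.measurable_empOf (u v : ℕ) :
    Measurable fun x : ℕ × ℕ → S => SE2.empOf u v x := by
  apply Measure.measurable_of_measurable_coe
  intro s hs
  simp only [SE2.empOf, Measure.smul_apply, Measure.finset_sum_apply,
    Measure.dirac_apply' _ hs, smul_eq_mul]
  exact (Finset.measurable_sum _ fun i _ => Finset.measurable_sum _ fun j _ =>
    (measurable_one.indicator hs).comp (measurable_pi_apply (i, j))).const_mul _

instance SE2.isFiniteMeasure_empOf (u v : ℕ) (x : ℕ × ℕ → S) :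
    IsFiniteMeasure (SE2.empOf u v x) := by
  constructor
  have h : (∑ i ∈ Finset.range u, ∑ j ∈ Finset.range v, Measure.dirac (x (i, j))) Set.univ
      = ((u * v : ℕ) : ℝ≥0∞) := by
    simp [Measure.finset_sum_apply]
  rw [SE2.empOf, Measure.smul_apply, h, smul_eq_mul]
  rcases Nat.eq_zero_or_pos (u * v) with h0 | h0
  · simp [h0]
  · rw [ENNReal.inv_mul_cancel (by exact_mod_cast h0.ne') (ENNReal.natCast_ne_top _)]
    exact ENNReal.one_lt_top

lemma SE2.integrable_of_bound {μ : Measure S} [IsFiniteMeasure μ] {f : S → ℝ}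
    (hf : Measurable f) {C : ℝ} (hC : ∀ x, |f x| ≤ C) : Integrable f μ :=
  Integrable.mono' (integrable_const C) hf.aestronglyMeasurable
    (Filter.Eventually.of_forall fun x => by simpa [Real.norm_eq_abs] using hC x)

lemma SE2.integral_empOf {f : S → ℝ} (hf : Measurable f) {C : ℝ} (hC : ∀ x, |f x| ≤ C)
    (u v : ℕ) (x : ℕ × ℕ → S) :
    ∫ a, f a ∂(SE2.empOf u v x)
      = ((u * v : ℕ) : ℝ)⁻¹ *
          ∑ i ∈ Finset.range u, ∑ j ∈ Finset.range v, f (x (i, j)) := by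
  have hint : ∀ a : S, Integrable f (Measure.dirac a) := fun a =>
    SE2.integrable_of_bound hf hC
  have hint2 : ∀ i : ℕ,
      Integrable f (∑ j ∈ Finset.range v, Measure.dirac (x (i, j))) := fun i =>
    integrable_finset_sum_measure.mpr fun j _ => hint _
  rw [SE2.empOf, integral_smul_measure,
    integral_finset_sum_measure (fun i _ => hint2 i)]
  have : ∀ i, ∫ a, f a ∂(∑ j ∈ Finset.range v, Measure.dirac (x (i, j)))
      = ∑ j ∈ Finset.range v, f (x (i, j)) := by
    intro i
    rw [integral_finset_sum_measure (fun j _ => hint _)]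
    exact Finset.sum_congr rfl fun j _ => integral_dirac' f _ hf.stronglyMeasurable
  simp only [this, smul_eq_mul, ENNReal.toReal_inv, ENNReal.toReal_natCast]

lemma SE2.swap_mem_range {i u : ℕ} (hi : i < u) (a : ℕ) :
    a ∈ Finset.range u ↔ Equiv.swap 0 i a ∈ Finset.range u := by
  simp only [Finset.mem_range]
  rcases eq_or_ne a 0 with rfl | h0
  · simp only [Equiv.swap_apply_left]; omega
  rcases eq_or_ne a i with rfl | hi'
  · simp only [Equiv.swap_apply_right]; omega
  · rw [Equiv.swap_apply_of_ne_of_ne h0 hi']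

lemma SE2.empOf_comp_swap (x : ℕ × ℕ → S) {i j u v : ℕ} (hi : i < u) (hj : j < v) :
    SE2.empOf u v (fun ij => x (Equiv.swap 0 i ij.1, Equiv.swap 0 j ij.2))
      = SE2.empOf u v x := by
  unfold SE2.empOf
  congr 1
  calc ∑ a ∈ Finset.range u, ∑ b ∈ Finset.range v,
        Measure.dirac (x (Equiv.swap 0 i a, Equiv.swap 0 j b))
      = ∑ a ∈ Finset.range u, ∑ b ∈ Finset.range v,
          Measure.dirac (x (a, Equiv.swap 0 j b)) :=
        Finset.sum_equiv (Equiv.swap 0 i) (SE2.swap_mem_range hi) (fun a _ => rfl)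
    _ = ∑ a ∈ Finset.range u, ∑ b ∈ Finset.range v, Measure.dirac (x (a, b)) :=
        Finset.sum_congr rfl fun a _ =>
          Finset.sum_equiv (Equiv.swap 0 j) (SE2.swap_mem_range hj) (fun b _ => rfl)

end SepExchAux

set_option maxHeartbeats 2000000

/-- The empirical distributions of a separately exchangeable random matrix
with values in a standard Borel space form a reverse measure-valued martingale on `ℕ²`. -/
theorem empDist2_isReverseMVM2_of_sepExchangeable
    {Ω S : Type*} [MeasurableSpace Ω] [MeasurableSpace S] [StandardBorelSpace S]
    (P : Measure Ω) [IsProbabilityMeasure P] (X : ℕ → ℕ → Ω → S)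
    (hmeas : ∀ i j, Measurable (X i j)) (hexch : SepExchangeable P X) :
    IsReverseMVM2 P X := by
  classical
  intro f hf hCex k l n m hk hkn hl hlm
  obtain ⟨C, hC⟩ := hCex
  -- basic measurability facts
  have hM : Measurable fun ω (ij : ℕ × ℕ) => X ij.1 ij.2 ω :=
    measurable_pi_lambda _ fun ij => hmeas ij.1 ij.2
  have hemp : ∀ u v : ℕ, Measurable (empDist2 X u v) :=
    fun u v => SE2.measurable_empDist2 X hmeas u v
  -- the tail σ-field is below the ambient one
  have hm0 : tailField2 X n m ≤ ‹MeasurableSpace Ω› := by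
    refine iSup_le fun u => iSup_le fun _ => iSup_le fun v => iSup_le fun _ => ?_
    exact (hemp u v).comap_le
  -- the combined tail map
  set ι := {p : ℕ × ℕ // n ≤ p.1 ∧ m ≤ p.2} with hι
  set G : Ω → ι → Measure S := fun ω q => empDist2 X q.1.1 q.1.2 ω with hG
  have hGmeas : Measurable G := measurable_pi_lambda _ fun q => hemp q.1.1 q.1.2
  have htail_le : tailField2 X n m ≤ MeasurableSpace.comap G inferInstance := by
    refine iSup_le fun u => iSup_le fun hu => iSup_le fun v => iSup_le fun hv => ?_
    have h1 : empDist2 X u v = (fun g : ι → Measure S => g ⟨(u, v), hu, hv⟩) ∘ G := rfl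
    rw [h1, ← MeasurableSpace.comap_comp]
    exact MeasurableSpace.comap_mono (measurable_pi_apply _).comap_le
  -- pointwise formula for the integrals against the empirical measures
  have hform : ∀ u v : ℕ, (fun ω => ∫ x, f x ∂(empDist2 X u v ω))
      = fun ω => ((u * v : ℕ) : ℝ)⁻¹ *
          ∑ i ∈ Finset.range u, ∑ j ∈ Finset.range v, f (X i j ω) := by
    intro u v
    funext ω
    rw [SE2.empDist2_eq_empOf]
    exact SE2.integral_empOf hf hC u v _
  -- integrability of the entries
  have hXint : ∀ i j : ℕ, Integrable (fun ω => f (X i j ω)) P :=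
    fun i j => SE2.integrable_of_bound (μ := P) (hf.comp (hmeas i j)) (fun ω => hC (X i j ω))
  have hηint : ∀ u v : ℕ, Integrable (fun ω => ∫ x, f x ∂(empDist2 X u v ω)) P := by
    intro u v
    rw [hform]
    exact (integrable_finset_sum _ fun i _ => integrable_finset_sum _ fun j _ =>
      hXint i j).const_mul _
  -- key exchangeability step: set-integral invariance over tail sets
  have hswap : ∀ (i j : ℕ), i < n → j < m → ∀ B : Set (ι → Measure S), MeasurableSet B →
      ∫ ω in G ⁻¹' B, f (X i j ω) ∂P = ∫ ω in G ⁻¹' B, f (X 0 0 ω) ∂P := by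
    intro i j hi hj B hB
    set σ := Equiv.swap 0 i with hσ
    set τ := Equiv.swap 0 j with hτ
    set M : Ω → ℕ × ℕ → S := fun ω ij => X ij.1 ij.2 ω with hMdef
    set M' : Ω → ℕ × ℕ → S := fun ω ij => X (σ ij.1) (τ ij.2) ω with hM'def
    have hM' : Measurable M' := measurable_pi_lambda _ fun ij => hmeas _ _
    set E : (ℕ × ℕ → S) → ι → Measure S := fun x q => SE2.empOf q.1.1 q.1.2 x with hE
    have hEmeas : Measurable E :=
      measurable_pi_lambda _ fun q => SE2.measurable_empOf q.1.1 q.1.2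
    have hEM : ∀ ω, E (M ω) = G ω := fun ω => rfl
    have hEM' : ∀ ω, E (M' ω) = G ω := by
      intro ω
      funext q
      have : M' ω = fun ij => (M ω) (σ ij.1, τ ij.2) := rfl
      rw [← hEM ω]
      show SE2.empOf q.1.1 q.1.2 (M' ω) = SE2.empOf q.1.1 q.1.2 (M ω)
      rw [this]
      exact SE2.empOf_comp_swap (M ω) (lt_of_lt_of_le hi q.2.1) (lt_of_lt_of_le hj q.2.2)
    set Φ : (ℕ × ℕ → S) → ℝ × (ι → Measure S) := fun x => (f (x (i, j)), E x) with hΦdef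
    have hΦ : Measurable Φ := (hf.comp (measurable_pi_apply (i, j))).prodMk hEmeas
    set h : ℝ × (ι → Measure S) → ℝ := fun rg => if rg.2 ∈ B then rg.1 else 0 with hh
    have hhm : Measurable h := by
      refine Measurable.ite ?_ measurable_fst measurable_const
      exact measurable_snd hB
    have hmap : Measure.map M' P = Measure.map M P := hexch σ τ
    have key : ∫ ω, h (Φ (M ω)) ∂P = ∫ ω, h (Φ (M' ω)) ∂P := by
      calc ∫ ω, h (Φ (M ω)) ∂P
          = ∫ y, (h ∘ Φ) y ∂(Measure.map M P) :=
            (integral_map hM.aemeasurable ((hhm.comp hΦ).aestronglyMeasurable)).symm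
        _ = ∫ y, (h ∘ Φ) y ∂(Measure.map M' P) := by rw [hmap]
        _ = ∫ ω, h (Φ (M' ω)) ∂P :=
            integral_map hM'.aemeasurable
              (by rw [hmap]; exact (hhm.comp hΦ).aestronglyMeasurable)
    have hGB : MeasurableSet (G ⁻¹' B) := hGmeas hB
    have e1 : ∀ ω, h (Φ (M ω)) = (G ⁻¹' B).indicator (fun ω => f (X i j ω)) ω := by
      intro ω
      simp only [hΦdef, hh, hEM ω, Set.indicator_apply, Set.mem_preimage]
      rfl
    have e2 : ∀ ω, h (Φ (M' ω)) = (G ⁻¹' B).indicator (fun ω => f (X 0 0 ω)) ω := by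
      intro ω
      simp only [hΦdef, hh, hEM' ω, Set.indicator_apply, Set.mem_preimage]
      have h1 : σ i = 0 := Equiv.swap_apply_right 0 i
      have h2 : τ j = 0 := Equiv.swap_apply_right 0 j
      show (if G ω ∈ B then f (X (σ i) (τ j) ω) else 0)
          = if ω ∈ G ⁻¹' B then f (X 0 0 ω) else 0
      rw [h1, h2]
      rfl
    rw [← integral_indicator hGB, ← integral_indicator hGB]
    calc ∫ ω, (G ⁻¹' B).indicator (fun ω => f (X i j ω)) ω ∂P
        = ∫ ω, h (Φ (M ω)) ∂P := by simp_rw [e1]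
      _ = ∫ ω, h (Φ (M' ω)) ∂P := key
      _ = ∫ ω, (G ⁻¹' B).indicator (fun ω => f (X 0 0 ω)) ω ∂P := by simp_rw [e2]
  -- set integrals of the empirical averages over tail sets
  have hset : ∀ (u v : ℕ), 1 ≤ u → u ≤ n → 1 ≤ v → v ≤ m →
      ∀ B : Set (ι → Measure S), MeasurableSet B →
      ∫ ω in G ⁻¹' B, (∫ x, f x ∂(empDist2 X u v ω)) ∂P
        = ∫ ω in G ⁻¹' B, f (X 0 0 ω) ∂P := by
    intro u v hu hun hv hvm B hB
    rw [hform]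
    have huv : ((u * v : ℕ) : ℝ) ≠ 0 := by positivity
    calc ∫ ω in G ⁻¹' B, ((u * v : ℕ) : ℝ)⁻¹ *
            ∑ i ∈ Finset.range u, ∑ j ∈ Finset.range v, f (X i j ω) ∂P
        = ((u * v : ℕ) : ℝ)⁻¹ * ∫ ω in G ⁻¹' B,
            ∑ i ∈ Finset.range u, ∑ j ∈ Finset.range v, f (X i j ω) ∂P := by
          rw [integral_const_mul]
      _ = ((u * v : ℕ) : ℝ)⁻¹ * ∑ i ∈ Finset.range u, ∑ j ∈ Finset.range v,
            ∫ ω in G ⁻¹' B, f (X i j ω) ∂P := by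
          rw [integral_finset_sum _ fun i _ => integrable_finset_sum _ fun j _ =>
            (hXint i j).integrableOn]
          congr 1
          exact Finset.sum_congr rfl fun i _ =>
            integral_finset_sum _ fun j _ => (hXint i j).integrableOn
      _ = ((u * v : ℕ) : ℝ)⁻¹ * ∑ i ∈ Finset.range u, ∑ j ∈ Finset.range v,
            ∫ ω in G ⁻¹' B, f (X 0 0 ω) ∂P := by
          congr 1
          refine Finset.sum_congr rfl fun i hi => Finset.sum_congr rfl fun j hj => ?_
          exact hswap i j (lt_of_lt_of_le (Finset.mem_range.mp hi) hun)
            (lt_of_lt_of_le (Finset.mem_range.mp hj) hvm) B hB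
      _ = ∫ ω in G ⁻¹' B, f (X 0 0 ω) ∂P := by
          simp only [Finset.sum_const, Finset.card_range, nsmul_eq_mul]
          field_simp
          push_cast
          ring
  -- tail-measurability of ω ↦ η_{n,m} f
  have hmeas_tail : Measurable[tailField2 X n m]
      fun ω => ∫ x, f x ∂(empDist2 X n m ω) := by
    set intF : Measure S → ℝ := fun μ =>
      (∫⁻ x, ENNReal.ofReal (f x) ∂μ).toReal - (∫⁻ x, ENNReal.ofReal (-f x) ∂μ).toReal
      with hintF
    have hintFm : Measurable intF :=
      ((Measure.measurable_lintegral hf.ennreal_ofReal).ennreal_toReal).sub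
        ((Measure.measurable_lintegral hf.neg.ennreal_ofReal).ennreal_toReal)
    have heq : (fun ω => ∫ x, f x ∂(empDist2 X n m ω)) = intF ∘ empDist2 X n m := by
      funext ω
      have hI : Integrable f (empDist2 X n m ω) := by
        rw [SE2.empDist2_eq_empOf]
        exact SE2.integrable_of_bound hf hC
      simpa [hintF] using integral_eq_lintegral_pos_part_sub_lintegral_neg_part hI
    rw [heq]
    have h1 : Measurable[MeasurableSpace.comap (empDist2 X n m) inferInstance]
        (empDist2 X n m) := Measurable.of_comap_le le_rfl
    have h2 := hintFm.comp h1
    refine h2.mono ?_ le_rfl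
    exact le_iSup_of_le n (le_iSup_of_le le_rfl (le_iSup_of_le m (le_iSup_of_le le_rfl le_rfl)))
  haveI : SigmaFinite (P.trim hm0) := by
    haveI : IsFiniteMeasure (P.trim hm0) := isFiniteMeasure_trim hm0
    infer_instance
  refine (ae_eq_condExp_of_forall_setIntegral_eq hm0 (hηint k l)
    (fun s _ _ => (hηint n m).integrableOn) ?_ ?_).symm
  · intro s hs _
    obtain ⟨B, hB, rfl⟩ := htail_le _ hs
    rw [hset n m (le_trans hk hkn) le_rfl (le_trans hl hlm) le_rfl B hB,
      hset k l hk hkn hl hlm B hB]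
  · exact StronglyMeasurable.aestronglyMeasurable hmeas_tail.stronglyMeasurable
end

section
/- Let ξ = (ξ_1, ξ_2, …) be an exchangeable sequence of integrable real-valued random variables, let S_n = ∑_{i=1}^n ξ_i, and let 𝒯_n = σ(S_k : k ≥ n). Then (S_n/n, 𝒯_n) is a reverse martingale: for all n ≥ 1, E[S_n/n | 𝒯_{n+1}] = S_{n+1}/(n+1) almost surely. -/
open MeasureTheory ProbabilityTheory
open scoped ENNReal

/-- The partial sum `S_n = ∑_{i=1}^n ξ_i` (with `ξ` indexed from `0`). -/
def partialSum {Ω : Type*} (ξ : ℕ → Ω → ℝ) (n : ℕ) (ω : Ω) : ℝ :=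
  ∑ i ∈ Finset.range n, ξ i ω

/-- The tail σ-field `𝒯_n = σ(S_k : k ≥ n)` generated by the partial sums from `n` on. -/
noncomputable def sumTailField {Ω : Type*} (ξ : ℕ → Ω → ℝ) (n : ℕ) : MeasurableSpace Ω :=
  ⨆ k, ⨆ _ : n ≤ k, MeasurableSpace.comap (partialSum ξ k) inferInstance

section Aux

variable {Ω : Type*} [MeasurableSpace Ω] {P : Measure Ω} [IsProbabilityMeasure P]
  {ξ : ℕ → Ω → ℝ}

lemma measurable_partialSum (hmeas : ∀ i, Measurable (ξ i)) (k : ℕ) :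
    Measurable (partialSum ξ k) := by
  unfold partialSum
  exact Finset.measurable_sum _ fun i _ => hmeas i

lemma sumTailField_le (hmeas : ∀ i, Measurable (ξ i)) (n : ℕ) :
    sumTailField ξ n ≤ ‹MeasurableSpace Ω› := by
  refine iSup₂_le fun k _ => ?_
  exact (measurable_partialSum hmeas k).comap_le

lemma exch_core (hmeas : ∀ i, Measurable (ξ i)) (hexch : Exchangeable P ξ)
    {n i j : ℕ} (hi : i < n + 1) (hj : j < n + 1)
    (t : Finset ℕ) (ht : ∀ k ∈ t, n + 1 ≤ k) (B : ℕ → Set ℝ)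
    (hB : ∀ k ∈ t, MeasurableSet (B k)) :
    ∫ ω in ⋂ k ∈ t, partialSum ξ k ⁻¹' B k, ξ i ω ∂P
      = ∫ ω in ⋂ k ∈ t, partialSum ξ k ⁻¹' B k, ξ j ω ∂P := by
  classical
  set s : Set Ω := ⋂ k ∈ t, partialSum ξ k ⁻¹' B k with hs_def
  have hs : MeasurableSet s := by
    refine MeasurableSet.biInter t.countable_toSet fun k hk => ?_
    exact (measurable_partialSum hmeas k) (hB k hk)
  set N : ℕ := (n + 1) + t.sup id with hN
  have hiN : i < N := by omega
  have hjN : j < N := by omega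
  have hkN : ∀ k ∈ t, k ≤ N := fun k hk =>
    le_trans (Finset.le_sup (f := id) hk) (by omega)
  set σ : Equiv.Perm ℕ := Equiv.swap i j with hσ
  set Φ : Ω → Fin N → ℝ := fun ω a => ξ (a : ℕ) ω with hΦ
  set Ψ : Ω → Fin N → ℝ := fun ω a => ξ (σ (a : ℕ)) ω with hΨ
  have hΦm : Measurable Φ := measurable_pi_lambda _ fun a => hmeas _
  have hΨm : Measurable Ψ := measurable_pi_lambda _ fun a => hmeas _
  have hlaw : Measure.map Ψ P = Measure.map Φ P :=
    hexch N (fun a => σ (a : ℕ)) (σ.injective.comp Fin.val_injective)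
  set e : ℕ → (Fin N → ℝ) → ℝ := fun l x => if h : l < N then x ⟨l, h⟩ else 0 with he
  have hem : ∀ l, Measurable (e l) := by
    intro l
    by_cases h : l < N
    · simpa [he, h] using measurable_pi_apply (⟨l, h⟩ : Fin N)
    · simpa [he, h] using measurable_const
  set g : (Fin N → ℝ) → ℝ :=
    fun x => e i x * ∏ k ∈ t, Set.indicator (B k) 1 (∑ l ∈ Finset.range k, e l x) with hg
  have hgm : Measurable g := by
    refine (hem i).mul (Finset.measurable_prod _ fun k hk => ?_)
    exact ((measurable_one.indicator (hB k hk)).comp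
      (Finset.measurable_sum _ fun l _ => hem l))
  have hswap : ∀ (k : ℕ), n + 1 ≤ k → ∀ ω,
      ∑ l ∈ Finset.range k, ξ (σ l) ω = ∑ l ∈ Finset.range k, ξ l ω := by
    intro k hk ω
    refine Finset.sum_equiv σ (fun l => ?_) (fun l _ => rfl)
    simp only [Finset.mem_range]
    rcases eq_or_ne l i with rfl | hli
    · rw [hσ, Equiv.swap_apply_left]; omega
    rcases eq_or_ne l j with rfl | hlj
    · rw [hσ, Equiv.swap_apply_right]; omega
    · rw [hσ, Equiv.swap_apply_of_ne_of_ne hli hlj]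
  have hsumΦ : ∀ ω, ∀ k ∈ t, ∑ l ∈ Finset.range k, e l (Φ ω) = partialSum ξ k ω := by
    intro ω k hk
    unfold partialSum
    refine Finset.sum_congr rfl fun l hl => ?_
    have hlN : l < N := lt_of_lt_of_le (Finset.mem_range.mp hl) (hkN k hk)
    simp [he, hΦ, hlN]
  have hsumΨ : ∀ ω, ∀ k ∈ t, ∑ l ∈ Finset.range k, e l (Ψ ω) = partialSum ξ k ω := by
    intro ω k hk
    have h1 : ∑ l ∈ Finset.range k, e l (Ψ ω) = ∑ l ∈ Finset.range k, ξ (σ l) ω := by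
      refine Finset.sum_congr rfl fun l hl => ?_
      have hlN : l < N := lt_of_lt_of_le (Finset.mem_range.mp hl) (hkN k hk)
      simp [he, hΨ, hlN]
    rw [h1, hswap k (ht k hk) ω]
    rfl
  have heiΦ : ∀ ω, e i (Φ ω) = ξ i ω := by
    intro ω
    show (if h : i < N then Φ ω ⟨i, h⟩ else 0) = ξ i ω
    rw [dif_pos hiN]
  have h1 : ∀ ω, g (Φ ω) = s.indicator (ξ i) ω := by
    intro ω
    show e i (Φ ω) * ∏ k ∈ t, Set.indicator (B k) 1 (∑ l ∈ Finset.range k, e l (Φ ω))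
      = s.indicator (ξ i) ω
    by_cases hω : ω ∈ s
    · have hmem : ∀ k ∈ t, partialSum ξ k ω ∈ B k := by
        intro k hk
        exact Set.mem_iInter₂.mp hω k hk
      have hprod : ∏ k ∈ t, Set.indicator (B k) (1 : ℝ → ℝ) (∑ l ∈ Finset.range k, e l (Φ ω)) = 1 := by
        refine Finset.prod_eq_one fun k hk => ?_
        rw [hsumΦ ω k hk, Set.indicator_of_mem (hmem k hk)]
        rfl
      rw [Set.indicator_of_mem hω, hprod, mul_one, heiΦ ω]
    · obtain ⟨k, hk, hknot⟩ : ∃ k ∈ t, partialSum ξ k ω ∉ B k := by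
        by_contra h
        push_neg at h
        exact hω (Set.mem_iInter₂.mpr h)
      have hprod : ∏ k ∈ t, Set.indicator (B k) (1 : ℝ → ℝ) (∑ l ∈ Finset.range k, e l (Φ ω)) = 0 := by
        refine Finset.prod_eq_zero hk ?_
        rw [hsumΦ ω k hk, Set.indicator_of_notMem hknot]
      rw [Set.indicator_of_notMem hω, hprod, mul_zero]
  have heiΨ : ∀ ω, e i (Ψ ω) = ξ j ω := by
    intro ω
    show (if h : i < N then Ψ ω ⟨i, h⟩ else 0) = ξ j ω
    rw [dif_pos hiN]
    show ξ (σ i) ω = ξ j ω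
    rw [hσ, Equiv.swap_apply_left]
  have h2 : ∀ ω, g (Ψ ω) = s.indicator (ξ j) ω := by
    intro ω
    show e i (Ψ ω) * ∏ k ∈ t, Set.indicator (B k) 1 (∑ l ∈ Finset.range k, e l (Ψ ω))
      = s.indicator (ξ j) ω
    by_cases hω : ω ∈ s
    · have hmem : ∀ k ∈ t, partialSum ξ k ω ∈ B k := by
        intro k hk
        exact Set.mem_iInter₂.mp hω k hk
      have hprod : ∏ k ∈ t, Set.indicator (B k) (1 : ℝ → ℝ) (∑ l ∈ Finset.range k, e l (Ψ ω)) = 1 := by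
        refine Finset.prod_eq_one fun k hk => ?_
        rw [hsumΨ ω k hk, Set.indicator_of_mem (hmem k hk)]
        rfl
      rw [Set.indicator_of_mem hω, hprod, mul_one, heiΨ ω]
    · obtain ⟨k, hk, hknot⟩ : ∃ k ∈ t, partialSum ξ k ω ∉ B k := by
        by_contra h
        push_neg at h
        exact hω (Set.mem_iInter₂.mpr h)
      have hprod : ∏ k ∈ t, Set.indicator (B k) (1 : ℝ → ℝ) (∑ l ∈ Finset.range k, e l (Ψ ω)) = 0 := by
        refine Finset.prod_eq_zero hk ?_
        rw [hsumΨ ω k hk, Set.indicator_of_notMem hknot]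
      rw [Set.indicator_of_notMem hω, hprod, mul_zero]
  calc ∫ ω in s, ξ i ω ∂P = ∫ ω, s.indicator (ξ i) ω ∂P := (integral_indicator hs).symm
    _ = ∫ ω, g (Φ ω) ∂P := by
        refine integral_congr_ae (Filter.Eventually.of_forall fun ω => ?_)
        exact (h1 ω).symm
    _ = ∫ x, g x ∂(Measure.map Φ P) :=
        (integral_map hΦm.aemeasurable hgm.aestronglyMeasurable).symm
    _ = ∫ x, g x ∂(Measure.map Ψ P) := by rw [hlaw]
    _ = ∫ ω, g (Ψ ω) ∂P := integral_map hΨm.aemeasurable hgm.aestronglyMeasurable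
    _ = ∫ ω, s.indicator (ξ j) ω ∂P := by
        refine integral_congr_ae (Filter.Eventually.of_forall fun ω => ?_)
        exact h2 ω
    _ = ∫ ω in s, ξ j ω ∂P := integral_indicator hs

lemma exch_setIntegral (hmeas : ∀ i, Measurable (ξ i)) (hint : ∀ i, Integrable (ξ i) P)
    (hexch : Exchangeable P ξ) {n i j : ℕ} (hi : i < n + 1) (hj : j < n + 1) :
    ∀ s, MeasurableSet[sumTailField ξ (n + 1)] s →
      ∫ ω in s, ξ i ω ∂P = ∫ ω in s, ξ j ω ∂P := by
  classical
  have hle := sumTailField_le hmeas (n + 1)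
  have hglobal : ∫ ω, ξ i ω ∂P = ∫ ω, ξ j ω ∂P := by
    have h := exch_core hmeas hexch hi hj ∅ (by simp) (fun _ => Set.univ) (by simp)
    simpa using h
  have h_eq : sumTailField ξ (n + 1)
      = MeasurableSpace.generateFrom
        (piiUnionInter
          (fun k => { u : Set Ω |
            MeasurableSet[MeasurableSpace.comap (partialSum ξ k) inferInstance] u })
          { k | n + 1 ≤ k }) := by
    exact (generateFrom_piiUnionInter_measurableSet
      (fun k => MeasurableSpace.comap (partialSum ξ k) inferInstance) {k | n + 1 ≤ k}).symm
  intro s hs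
  refine MeasurableSpace.induction_on_inter
    (m := sumTailField ξ (n + 1))
    (C := fun u _ => ∫ ω in u, ξ i ω ∂P = ∫ ω in u, ξ j ω ∂P)
    h_eq
    (isPiSystem_piiUnionInter _
      (fun k => @MeasurableSpace.isPiSystem_measurableSet Ω
        (MeasurableSpace.comap (partialSum ξ k) inferInstance)) _)
    (by simp) ?_ ?_ ?_ s hs
  · rintro u ⟨F, hFS, f, hf, rfl⟩
    choose! B hB1 hB2 using fun k (hk : k ∈ F) =>
      MeasurableSpace.measurableSet_comap.mp (hf k hk)
    have hrw : (⋂ k ∈ F, f k) = ⋂ k ∈ F, partialSum ξ k ⁻¹' B k := by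
      refine Set.iInter₂_congr fun k hk => ?_
      exact (hB2 k hk).symm
    rw [hrw]
    exact exch_core hmeas hexch hi hj F (fun k hk => hFS hk) B hB1
  · intro u hu hC
    have hum : MeasurableSet u := hle u hu
    have h1 := integral_add_compl hum (hint i)
    have h2 := integral_add_compl hum (hint j)
    have := hglobal
    linarith
  · intro f hdisj hf hC
    have hfm : ∀ k, MeasurableSet (f k) := fun k => hle _ (hf k)
    rw [integral_iUnion hfm hdisj (hint i).integrableOn,
      integral_iUnion hfm hdisj (hint j).integrableOn]
    exact tsum_congr hC

lemma condexp_exch_eq (hmeas : ∀ i, Measurable (ξ i)) (hint : ∀ i, Integrable (ξ i) P)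
    (hexch : Exchangeable P ξ) {n i j : ℕ} (hi : i < n + 1) (hj : j < n + 1) :
    P[ξ i | sumTailField ξ (n + 1)] =ᵐ[P] P[ξ j | sumTailField ξ (n + 1)] := by
  have hle := sumTailField_le hmeas (n + 1)
  haveI : SigmaFinite (P.trim hle) := by infer_instance
  refine ae_eq_condExp_of_forall_setIntegral_eq hle (hint j)
    (fun s _ _ => integrable_condExp.integrableOn) (fun s hs _ => ?_)
    stronglyMeasurable_condExp.aestronglyMeasurable
  rw [setIntegral_condExp hle (hint i) hs]
  exact exch_setIntegral hmeas hint hexch hi hj s hs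

end Aux

/-- For an exchangeable sequence of integrable real random variables,
`(S_n / n, 𝒯_n)` is a reverse martingale: `E[S_n/n | 𝒯_{n+1}] = S_{n+1}/(n+1)` a.s. -/
theorem reverse_martingale_partialSum
    {Ω : Type*} [MeasurableSpace Ω] (P : Measure Ω) [IsProbabilityMeasure P]
    (ξ : ℕ → Ω → ℝ) (hmeas : ∀ i, Measurable (ξ i)) (hint : ∀ i, Integrable (ξ i) P)
    (hexch : Exchangeable P ξ) :
    ∀ n : ℕ, 1 ≤ n →
      P[(fun ω => partialSum ξ n ω / n) | sumTailField ξ (n + 1)]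
        =ᵐ[P] fun ω => partialSum ξ (n + 1) ω / (n + 1) := by
  intro n hn
  classical
  have hle := sumTailField_le hmeas (n + 1)
  haveI : SigmaFinite (P.trim hle) := by infer_instance
  -- conditional expectations of the ξ i agree for i < n + 1
  have hA : ∀ i, i < n + 1 → P[ξ i | sumTailField ξ (n + 1)] =ᵐ[P] P[ξ 0 | sumTailField ξ (n + 1)] := fun i hi =>
    condexp_exch_eq hmeas hint hexch hi (Nat.succ_pos n)
  -- conditional expectation of partial sums
  have hSsum : ∀ m : ℕ, m ≤ n + 1 →
      P[partialSum ξ m | sumTailField ξ (n + 1)] =ᵐ[P] fun ω => (m : ℝ) * (P[ξ 0 | sumTailField ξ (n + 1)]) ω := by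
    intro m hm
    have h1 : partialSum ξ m = ∑ l ∈ Finset.range m, ξ l := by
      funext ω
      simp [partialSum, Finset.sum_apply]
    rw [h1]
    refine (condExp_finset_sum (fun l _ => hint l) (sumTailField ξ (n + 1))).trans ?_
    have h2 : ∀ᵐ ω ∂P, ∀ l ∈ Finset.range m, (P[ξ l | sumTailField ξ (n + 1)]) ω = (P[ξ 0 | sumTailField ξ (n + 1)]) ω := by
      rw [Filter.eventually_all_finset]
      intro l hl
      exact hA l (lt_of_lt_of_le (Finset.mem_range.mp hl) hm)
    filter_upwards [h2] with ω hω
    rw [Finset.sum_apply]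
    rw [Finset.sum_congr rfl hω]
    simp [mul_comm]
  -- the (n+1)-st partial sum is 𝒯-measurable
  have hle2 : MeasurableSpace.comap (partialSum ξ (n + 1)) inferInstance ≤ sumTailField ξ (n + 1) :=
    le_iSup₂ (f := fun k (_ : n + 1 ≤ k) =>
      MeasurableSpace.comap (partialSum ξ k) inferInstance) (n + 1) le_rfl
  have hTmeas : Measurable[sumTailField ξ (n + 1)] (partialSum ξ (n + 1)) :=
    fun u hu => hle2 _ ⟨u, hu, rfl⟩
  have hintS : Integrable (partialSum ξ (n + 1)) P := by
    have : partialSum ξ (n + 1) = ∑ l ∈ Finset.range (n + 1), ξ l := by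
      funext ω
      simp [partialSum, Finset.sum_apply]
    rw [this]
    exact integrable_finset_sum' _ fun l _ => hint l
  have hS1 : P[partialSum ξ (n + 1) | sumTailField ξ (n + 1)] = partialSum ξ (n + 1) :=
    condExp_of_stronglyMeasurable hle hTmeas.stronglyMeasurable hintS
  have hkey : partialSum ξ (n + 1) =ᵐ[P] fun ω => ((n : ℝ) + 1) * (P[ξ 0 | sumTailField ξ (n + 1)]) ω := by
    have := hSsum (n + 1) le_rfl
    rw [hS1] at this
    refine this.trans (Filter.Eventually.of_forall fun ω => ?_)
    push_cast
    ring
  -- LHS computation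
  have hdiv : (fun ω => partialSum ξ n ω / (n : ℝ)) = (n : ℝ)⁻¹ • partialSum ξ n := by
    funext ω
    simp [div_eq_inv_mul]
  have hLHS : P[(fun ω => partialSum ξ n ω / (n : ℝ)) | sumTailField ξ (n + 1)]
      =ᵐ[P] fun ω => (P[ξ 0 | sumTailField ξ (n + 1)]) ω := by
    rw [hdiv]
    refine (condExp_smul (μ := P) (m := sumTailField ξ (n + 1)) ((n : ℝ)⁻¹) (partialSum ξ n)).trans ?_
    have h3 := hSsum n (Nat.le_succ n)
    filter_upwards [h3] with ω hω
    have hn' : (n : ℝ) ≠ 0 := Nat.cast_ne_zero.mpr (by omega)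
    simp only [Pi.smul_apply, smul_eq_mul]
    rw [hω]
    field_simp
  refine hLHS.trans ?_
  filter_upwards [hkey] with ω hω
  rw [hω]
  have hn1 : ((n : ℝ) + 1) ≠ 0 := by positivity
  field_simp
end

section
/- Let ξ = (ξ_1, ξ_2, …) be an exchangeable sequence of integrable real-valued random variables, let S_n = ∑_{i=1}^n ξ_i, and let 𝒯_n = σ(S_k : k ≥ n). Then for every n and all j, k ≤ n+1, E[ξ_j | 𝒯_{n+1}] = E[ξ_k | 𝒯_{n+1}] almost surely. -/
open MeasureTheory ProbabilityTheory
open scoped ENNReal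

/-- Summing a function over `range x` is invariant under precomposition with a swap of two
indices below `x`. -/
lemma sum_range_swap {f : ℕ → ℝ} {j k x : ℕ} (hj : j < x) (hk : k < x) :
    ∑ l ∈ Finset.range x, f (Equiv.swap j k l) = ∑ l ∈ Finset.range x, f l := by
  refine Finset.sum_equiv (Equiv.swap j k) (fun l => ?_) (fun l _ => rfl)
  simp only [Finset.mem_range]
  rcases eq_or_ne l j with rfl | hlj
  · simp [Equiv.swap_apply_left, hj, hk]
  · rcases eq_or_ne l k with rfl | hlk
    · simp [Equiv.swap_apply_right, hj, hk]
    · rw [Equiv.swap_apply_of_ne_of_ne hlj hlk]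

/-- Integrals of a measurable functional of the first `M` variables are invariant under
swapping two indices, for an exchangeable sequence. -/
lemma integral_swap_eq {Ω : Type*} [MeasurableSpace Ω] (P : Measure Ω)
    (ξ : ℕ → Ω → ℝ) (hmeas : ∀ i, Measurable (ξ i)) (hexch : Exchangeable P ξ)
    (M j k : ℕ) (Φ : (Fin M → ℝ) → ℝ) (hΦ : Measurable Φ) :
    ∫ ω, Φ (fun i => ξ (Equiv.swap j k i) ω) ∂P = ∫ ω, Φ (fun i => ξ (i : ℕ) ω) ∂P := by
  have hinj : Function.Injective (fun i : Fin M => Equiv.swap j k (i : ℕ)) :=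
    (Equiv.swap j k).injective.comp Fin.val_injective
  have hmap := hexch M (fun i : Fin M => Equiv.swap j k (i : ℕ)) hinj
  have hW : Measurable (fun ω (i : Fin M) => ξ (i : ℕ) ω) :=
    measurable_pi_lambda _ fun i => hmeas _
  have hW' : Measurable (fun ω (i : Fin M) => ξ (Equiv.swap j k (i : ℕ)) ω) :=
    measurable_pi_lambda _ fun i => hmeas _
  calc ∫ ω, Φ (fun i => ξ (Equiv.swap j k (i : ℕ)) ω) ∂P
      = ∫ w, Φ w ∂(Measure.map (fun ω (i : Fin M) => ξ (Equiv.swap j k (i : ℕ)) ω) P) := by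
        rw [MeasureTheory.integral_map hW'.aemeasurable hΦ.aestronglyMeasurable]
    _ = ∫ w, Φ w ∂(Measure.map (fun ω (i : Fin M) => ξ (i : ℕ) ω) P) := by rw [hmap]
    _ = ∫ ω, Φ (fun i => ξ (i : ℕ) ω) ∂P := by
        rw [MeasureTheory.integral_map hW.aemeasurable hΦ.aestronglyMeasurable]

/-- For an exchangeable sequence of integrable real random variables and
the tail σ-fields `𝒯_n = σ(S_k : k ≥ n)` of the partial sums, the conditional expectations
`E[ξ_j | 𝒯_{n+1}]`, for one-based `j ≤ n + 1`, all coincide a.s.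
(With zero-based indexing this reads: `E[ξ_j | 𝒯_{n+1}] = E[ξ_k | 𝒯_{n+1}]` for `j, k ≤ n`.) -/
theorem condexp_eq_of_exchangeable
    {Ω : Type*} [MeasurableSpace Ω] (P : Measure Ω) [IsProbabilityMeasure P]
    (ξ : ℕ → Ω → ℝ) (hmeas : ∀ i, Measurable (ξ i)) (hint : ∀ i, Integrable (ξ i) P)
    (hexch : Exchangeable P ξ) :
    ∀ n j k : ℕ, j ≤ n → k ≤ n →
      P[ξ j | sumTailField ξ (n + 1)] =ᵐ[P] P[ξ k | sumTailField ξ (n + 1)] := by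
  intro n j k hj hk
  have hSmeas : ∀ m, Measurable (partialSum ξ m) := fun m =>
    Finset.measurable_sum _ fun i _ => hmeas i
  -- the tail σ-field is a sub-σ-field
  have hle : sumTailField ξ (n + 1) ≤ ‹MeasurableSpace Ω› := by
    refine iSup_le fun m => iSup_le fun _ => (hSmeas m).comap_le
  -- equality of total integrals
  have htotal : ∫ ω, ξ j ω ∂P = ∫ ω, ξ k ω ∂P := by
    have hj' : j < n + 1 := Nat.lt_succ_of_le hj
    have h := integral_swap_eq P ξ hmeas hexch (n + 1) j k
      (fun w => w ⟨j, hj'⟩) (measurable_pi_apply _)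
    simpa [Equiv.swap_apply_left] using h.symm
  -- key claim: set integrals agree on the tail σ-field
  have key : ∀ A, MeasurableSet[sumTailField ξ (n + 1)] A →
      ∫ ω in A, ξ j ω ∂P = ∫ ω in A, ξ k ω ∂P := by
    have h_eq : sumTailField ξ (n + 1)
        = MeasurableSpace.generateFrom
          (piiUnionInter
            (fun m => {s | MeasurableSet[MeasurableSpace.comap (partialSum ξ m) inferInstance] s})
            (Set.Ici (n + 1))) := by
      rw [generateFrom_piiUnionInter_measurableSet
        (fun m => MeasurableSpace.comap (partialSum ξ m) inferInstance) (Set.Ici (n + 1))]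
      rfl
    have h_pi : IsPiSystem
        (piiUnionInter
          (fun m => {s | MeasurableSet[MeasurableSpace.comap (partialSum ξ m) inferInstance] s})
          (Set.Ici (n + 1))) :=
      isPiSystem_piiUnionInter _
        (fun m => @MeasurableSpace.isPiSystem_measurableSet Ω
          (MeasurableSpace.comap (partialSum ξ m) inferInstance)) _
    refine MeasurableSpace.induction_on_inter (m := sumTailField ξ (n + 1))
      (C := fun A _ => ∫ ω in A, ξ j ω ∂P = ∫ ω in A, ξ k ω ∂P) h_eq h_pi
      (by simp) ?_ ?_ ?_
    · -- basic case: finite intersections of preimages under partial sums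
      rintro A ⟨t, hts, f, hf, rfl⟩
      -- choose Borel sets
      have hchoice : ∀ x ∈ t, ∃ B : Set ℝ, MeasurableSet B ∧ (partialSum ξ x) ⁻¹' B = f x := by
        intro x hx
        exact hf x hx
      choose! B hBmeas hBf using hchoice
      set M : ℕ := max (n + 1) (t.sup id + 1) with hM
      have hjM : j < M := lt_of_le_of_lt hj (lt_of_lt_of_le (Nat.lt_succ_self n) (le_max_left _ _))
      have hkM : k < M := lt_of_le_of_lt hk (lt_of_lt_of_le (Nat.lt_succ_self n) (le_max_left _ _))
      have hxM : ∀ x ∈ t, x < M := fun x hx =>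
        lt_of_le_of_lt (Finset.le_sup (f := id) hx) (lt_of_lt_of_le (Nat.lt_succ_self _)
          (le_max_right _ _))
      have hxn : ∀ x ∈ t, n + 1 ≤ x := fun x hx => hts hx
      -- padding
      set pad : (Fin M → ℝ) → ℕ → ℝ := fun w l => if h : l < M then w ⟨l, h⟩ else 0 with hpad
      have hpadmeas : ∀ l, Measurable fun w : Fin M → ℝ => pad w l := by
        intro l
        by_cases h : l < M
        · simpa [hpad, h] using measurable_pi_apply (⟨l, h⟩ : Fin M)
        · simpa [hpad, h] using measurable_const
      set Φ : (Fin M → ℝ) → ℝ := fun w => pad w j *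
        ∏ x ∈ t, Set.indicator (B x) (fun _ => (1 : ℝ)) (∑ l ∈ Finset.range x, pad w l) with hΦdef
      have hΦ : Measurable Φ := by
        refine (hpadmeas j).mul (Finset.measurable_prod _ fun x _ => ?_)
        exact (measurable_const.indicator (hBmeas x (by assumption))).comp
          (Finset.measurable_sum _ fun l _ => hpadmeas l)
      -- pad of the vector of ξ's
      have hpadW : ∀ (g : ℕ → ℝ) (l : ℕ), l < M → pad (fun i : Fin M => g (i : ℕ)) l = g l := by
        intro g l hl; simp [hpad, hl]
      -- identify Φ ∘ W
      have hΦW : ∀ ω, Φ (fun i : Fin M => ξ (i : ℕ) ω)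
          = ξ j ω * ∏ x ∈ t, Set.indicator (B x) (fun _ => (1 : ℝ)) (partialSum ξ x ω) := by
        intro ω
        simp only [hΦdef]
        rw [hpadW (fun l => ξ l ω) j hjM]
        congr 1
        refine Finset.prod_congr rfl fun x hx => ?_
        congr 1
        refine Finset.sum_congr rfl fun l hl => ?_
        exact hpadW (fun l' => ξ l' ω) l (lt_trans (Finset.mem_range.mp hl) (hxM x hx))
      -- identify Φ ∘ (swapped W)
      have hΦW' : ∀ ω, Φ (fun i : Fin M => ξ (Equiv.swap j k (i : ℕ)) ω)
          = ξ k ω * ∏ x ∈ t, Set.indicator (B x) (fun _ => (1 : ℝ)) (partialSum ξ x ω) := by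
        intro ω
        simp only [hΦdef]
        rw [hpadW (fun l => ξ (Equiv.swap j k l) ω) j hjM, Equiv.swap_apply_left]
        congr 1
        refine Finset.prod_congr rfl fun x hx => ?_
        congr 1
        have hsum : ∑ l ∈ Finset.range x, pad (fun i : Fin M => ξ (Equiv.swap j k (i : ℕ)) ω) l
            = ∑ l ∈ Finset.range x, ξ (Equiv.swap j k l) ω := by
          refine Finset.sum_congr rfl fun l hl => ?_
          exact hpadW (fun l' => ξ (Equiv.swap j k l') ω) l
            (lt_trans (Finset.mem_range.mp hl) (hxM x hx))
        rw [hsum]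
        exact sum_range_swap (f := fun l => ξ l ω)
          (lt_of_le_of_lt hj (hxn x hx)) (lt_of_le_of_lt hk (hxn x hx))
      -- indicator identity
      have hind : ∀ (m : ℕ) (g : Ω → ℝ),
          (⋂ x ∈ t, f x).indicator g
            = fun ω => g ω * ∏ x ∈ t, Set.indicator (B x) (fun _ => (1 : ℝ)) (partialSum ξ x ω) := by
        intro m g
        funext ω
        by_cases hω : ω ∈ ⋂ x ∈ t, f x
        · rw [Set.indicator_of_mem hω]
          have : ∀ x ∈ t, Set.indicator (B x) (fun _ => (1 : ℝ)) (partialSum ξ x ω) = 1 := by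
            intro x hx
            have hmem : ω ∈ f x := Set.mem_iInter₂.mp hω x hx
            rw [← hBf x hx] at hmem
            exact Set.indicator_of_mem (Set.mem_preimage.mp hmem) _
          rw [Finset.prod_congr rfl this, Finset.prod_const_one, mul_one]
        · rw [Set.indicator_of_notMem hω]
          obtain ⟨x, hx, hmem⟩ : ∃ x ∈ t, ω ∉ f x := by
            by_contra h
            push_neg at h
            exact hω (Set.mem_iInter₂.mpr h)
          have : Set.indicator (B x) (fun _ => (1 : ℝ)) (partialSum ξ x ω) = 0 := by
            rw [← hBf x hx] at hmem
            exact Set.indicator_of_notMem (fun h => hmem (Set.mem_preimage.mpr h)) _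
          rw [Finset.prod_eq_zero hx this, mul_zero]
      -- the set is measurable in the ambient σ-algebra
      have hAmeas : MeasurableSet (⋂ x ∈ t, f x) := by
        refine Set.Finite.measurableSet_biInter t.finite_toSet fun x hx => ?_
        rw [← hBf x hx]
        exact (hSmeas x) (hBmeas x hx)
      have hswap := integral_swap_eq P ξ hmeas hexch M j k Φ hΦ
      calc ∫ ω in ⋂ x ∈ t, f x, ξ j ω ∂P
          = ∫ ω, (⋂ x ∈ t, f x).indicator (ξ j) ω ∂P := (integral_indicator hAmeas).symm
        _ = ∫ ω, Φ (fun i : Fin M => ξ (i : ℕ) ω) ∂P := by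
            rw [hind 0 (ξ j)]
            exact integral_congr_ae (Filter.Eventually.of_forall fun ω => (hΦW ω).symm)
        _ = ∫ ω, Φ (fun i : Fin M => ξ (Equiv.swap j k (i : ℕ)) ω) ∂P := hswap.symm
        _ = ∫ ω, (⋂ x ∈ t, f x).indicator (ξ k) ω ∂P := by
            rw [hind 0 (ξ k)]
            exact integral_congr_ae (Filter.Eventually.of_forall fun ω => hΦW' ω)
        _ = ∫ ω in ⋂ x ∈ t, f x, ξ k ω ∂P := integral_indicator hAmeas
    · -- complements
      intro A hA hAeq
      have hA' : MeasurableSet A := hle _ hA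
      have hj' := integral_add_compl hA' (hint j)
      have hk' := integral_add_compl hA' (hint k)
      have : ∫ ω in A, ξ j ω ∂P + ∫ ω in Aᶜ, ξ j ω ∂P
          = ∫ ω in A, ξ k ω ∂P + ∫ ω in Aᶜ, ξ k ω ∂P := by
        rw [hj', hk', htotal]
      rw [hAeq] at this
      linarith
    · -- disjoint unions
      intro g hdisj hgmeas hgeq
      have hg' : ∀ i, MeasurableSet (g i) := fun i => hle _ (hgmeas i)
      rw [integral_iUnion hg' hdisj (hint j).integrableOn,
        integral_iUnion hg' hdisj (hint k).integrableOn]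
      exact tsum_congr hgeq
  -- conclude via uniqueness of conditional expectation
  haveI : SigmaFinite (P.trim hle) := by infer_instance
  refine (ae_eq_condExp_of_forall_setIntegral_eq hle (hint j)
    (fun s _ _ => integrable_condExp.integrableOn)
    (fun s hs _ => ?_)
    (StronglyMeasurable.aestronglyMeasurable stronglyMeasurable_condExp)).symm
  rw [setIntegral_condExp hle (hint k) hs]
  exact (key s hs).symm
end
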